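/- arXiv:2512.00661 — 3 statements merged into one kernel-verified Lean document; each statement's English description precedes it below -/
import Mathlib

section
/- (Perpendicular bisector theorem / Conley) Let q_1,...,q_n be a planar central configuration and p, q two of the bodies. Partition the plane into the four closed quadrants I, II, III, IV determined by the line through p, q and the perpendicular bisector of segment pq (numbered counterclockwise starting from upper right). If no body lies in the interior of I ∪ III, then no body lies in the interior of II ∪ IV, and conversely. -/
open Finset

/-- Planar wedge product of two vectors of the Euclidean plane. -/
noncomputable def wedge (p r : EuclideanSpace ℝ (Fin 2)) : ℝ := p 0 * r 1 - p 1 * r 0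

lemma wedge_self' (v : EuclideanSpace ℝ (Fin 2)) : wedge v v = 0 := by
  simp [wedge, mul_comm]

lemma wedge_sub' (v x y : EuclideanSpace ℝ (Fin 2)) :
    wedge v (x - y) = wedge v x - wedge v y := by
  simp only [wedge, PiLp.sub_apply]; ring

/-- wedge with a fixed first argument, as a linear map. -/
noncomputable def Wmap (v : EuclideanSpace ℝ (Fin 2)) :
    EuclideanSpace ℝ (Fin 2) →ₗ[ℝ] ℝ where
  toFun z := wedge v z
  map_add' x y := by simp only [wedge, PiLp.add_apply]; ring
  map_smul' c x := by simp only [wedge, PiLp.smul_apply, smul_eq_mul, RingHom.id_apply]; ring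

lemma prod_sign' {u g t : ℝ} (h : 0 < u ↔ 0 < g) (h' : u < 0 ↔ g < 0) :
    (0 < u * t ↔ 0 < g * t) ∧ (u * t < 0 ↔ g * t < 0) := by
  rw [mul_pos_iff, mul_pos_iff, mul_neg_iff, mul_neg_iff]
  constructor <;> tauto

lemma sign_key' {m da db t : ℝ} (hm : 0 < m) (ha : 0 < da) (hb : 0 < db) :
    (0 < (m / da ^ 3 - m / db ^ 3) * t ↔ t * (da ^ 2 - db ^ 2) < 0) ∧
    ((m / da ^ 3 - m / db ^ 3) * t < 0 ↔ 0 < t * (da ^ 2 - db ^ 2)) := by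
  have h3 : 0 < m / da ^ 3 - m / db ^ 3 ↔ da < db := by
    rw [sub_pos, div_lt_div_iff_of_pos_left hm (pow_pos hb 3) (pow_pos ha 3)]
    exact pow_lt_pow_iff_left₀ ha.le hb.le (by norm_num)
  have h4 : m / da ^ 3 - m / db ^ 3 < 0 ↔ db < da := by
    rw [sub_neg, div_lt_div_iff_of_pos_left hm (pow_pos ha 3) (pow_pos hb 3)]
    exact pow_lt_pow_iff_left₀ hb.le ha.le (by norm_num)
  have h5 : (0 < m / da ^ 3 - m / db ^ 3 ↔ 0 < db ^ 2 - da ^ 2) := by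
    rw [h3, sub_pos]
    exact (pow_lt_pow_iff_left₀ ha.le hb.le (by norm_num)).symm
  have h6 : (m / da ^ 3 - m / db ^ 3 < 0 ↔ db ^ 2 - da ^ 2 < 0) := by
    rw [h4, sub_neg]
    exact (pow_lt_pow_iff_left₀ hb.le ha.le (by norm_num)).symm
  obtain ⟨H1, H2⟩ := prod_sign' h5 h6
  constructor
  · rw [H1]; constructor <;> intro h <;> nlinarith
  · rw [H2]; constructor <;> intro h <;> nlinarith

/-- Perpendicular bisector theorem (Conley).  With axes the line `q a q b` and the
perpendicular bisector of the segment, a point `z` lies in the interior of the union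
of the first and third closed quadrants iff
`wedge (q b − q a) (z − q a) * (dist z (q a)² − dist z (q b)²) > 0`,
and in the interior of the union of the second and fourth iff this product is `< 0`. -/
theorem stmt11 (n : ℕ) (q : Fin n → EuclideanSpace ℝ (Fin 2)) (m : Fin n → ℝ)
    (lam : ℝ) (hm : ∀ i, 0 < m i) (hq : ∀ i j, i ≠ j → q i ≠ q j)
    (hcom : ∑ i, m i • q i = 0)
    (hcc : ∀ i, lam • q i
      = ∑ j ∈ Finset.univ.erase i, (m j / dist (q i) (q j) ^ 3) • (q j - q i))
    (a b : Fin n) (hab : a ≠ b) :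
    (∀ j, j ≠ a → j ≠ b →
        ¬ 0 < wedge (q b - q a) (q j - q a)
              * (dist (q j) (q a) ^ 2 - dist (q j) (q b) ^ 2))
      ↔ (∀ j, j ≠ a → j ≠ b →
        ¬ wedge (q b - q a) (q j - q a)
              * (dist (q j) (q a) ^ 2 - dist (q j) (q b) ^ 2) < 0) := by
  classical
  set v : EuclideanSpace ℝ (Fin 2) := q b - q a with hv
  set s : Finset (Fin n) := (Finset.univ.erase a).erase b with hs
  -- wedge of differences with b equals with a
  have hwb : ∀ j, wedge v (q j - q b) = wedge v (q j - q a) := by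
    intro j
    have h := wedge_sub' v (q j - q a) (q j - q b)
    have h2 : (q j - q a) - (q j - q b) = v := by rw [hv]; abel
    rw [h2, wedge_self'] at h
    linarith
  -- the key identity
  have key : ∑ j ∈ s, ((m j / dist (q a) (q j) ^ 3 - m j / dist (q b) (q j) ^ 3)
      * wedge v (q j - q a)) = 0 := by
    have Ea := congrArg (Wmap v) (hcc a)
    have Eb := congrArg (Wmap v) (hcc b)
    simp only [map_smul, map_sum, smul_eq_mul, Wmap, LinearMap.coe_mk, AddHom.coe_mk]
      at Ea Eb
    have hbmem : b ∈ Finset.univ.erase a := by simp [hab.symm]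
    have hamem : a ∈ Finset.univ.erase b := by simp [hab]
    rw [← Finset.sum_erase_add _ _ hbmem] at Ea
    rw [← Finset.sum_erase_add _ _ hamem] at Eb
    have hset : (Finset.univ.erase b).erase a = s := by
      rw [hs]; ext x; simp; tauto
    rw [hset] at Eb
    have hwv : wedge v (q b - q a) = 0 := by rw [← hv]; exact wedge_self' v
    have hwv' : wedge v (q a - q b) = 0 := by
      have := wedge_sub' v (q a) (q b)
      have h2 := wedge_sub' v (q b) (q a)
      rw [← hv, wedge_self'] at h2
      linarith
    rw [hwv, mul_zero, add_zero] at Ea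
    rw [hwv', mul_zero, add_zero] at Eb
    have hWab : wedge v (q a) = wedge v (q b) := by
      have h2 := wedge_sub' v (q b) (q a)
      rw [← hv, wedge_self'] at h2
      linarith
    have hdiff : (∑ j ∈ s, m j / dist (q a) (q j) ^ 3 * wedge v (q j - q a))
        - (∑ j ∈ s, m j / dist (q b) (q j) ^ 3 * wedge v (q j - q b)) = 0 := by
      rw [← Ea, ← Eb, hWab]; ring
    rw [← Finset.sum_sub_distrib] at hdiff
    rw [← hdiff]
    apply Finset.sum_congr rfl
    intro j hj
    rw [hwb j]; ring
  -- sign facts for each j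
  have hsgn : ∀ j, j ≠ a → j ≠ b →
      (0 < (m j / dist (q a) (q j) ^ 3 - m j / dist (q b) (q j) ^ 3)
          * wedge v (q j - q a)
        ↔ wedge v (q j - q a) * (dist (q j) (q a) ^ 2 - dist (q j) (q b) ^ 2) < 0) ∧
      ((m j / dist (q a) (q j) ^ 3 - m j / dist (q b) (q j) ^ 3)
          * wedge v (q j - q a) < 0
        ↔ 0 < wedge v (q j - q a) * (dist (q j) (q a) ^ 2 - dist (q j) (q b) ^ 2)) := by
    intro j hja hjb
    have hda : 0 < dist (q a) (q j) := dist_pos.mpr (hq a j (Ne.symm hja))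
    have hdb : 0 < dist (q b) (q j) := dist_pos.mpr (hq b j (Ne.symm hjb))
    have := sign_key' (t := wedge v (q j - q a)) (hm j) hda hdb
    rwa [dist_comm (q j) (q a), dist_comm (q j) (q b)]
  have hmem : ∀ j, j ∈ s ↔ j ≠ a ∧ j ≠ b := by
    intro j; rw [hs]; simp; tauto
  constructor
  · intro H j hja hjb hlt
    -- all terms nonneg
    have hnn : ∀ i ∈ s, 0 ≤ (m i / dist (q a) (q i) ^ 3 - m i / dist (q b) (q i) ^ 3)
        * wedge v (q i - q a) := by
      intro i hi
      obtain ⟨hia, hib⟩ := (hmem i).mp hi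
      by_contra hneg
      push_neg at hneg
      exact H i hia hib (((hsgn i hia hib).2).mp hneg)
    have hz := (Finset.sum_eq_zero_iff_of_nonneg hnn).mp key j ((hmem j).mpr ⟨hja, hjb⟩)
    have := ((hsgn j hja hjb).1).mpr hlt
    rw [hz] at this
    exact lt_irrefl 0 this
  · intro H j hja hjb hlt
    have hnp : ∀ i ∈ s, (m i / dist (q a) (q i) ^ 3 - m i / dist (q b) (q i) ^ 3)
        * wedge v (q i - q a) ≤ 0 := by
      intro i hi
      obtain ⟨hia, hib⟩ := (hmem i).mp hi
      by_contra hneg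
      push_neg at hneg
      exact H i hia hib (((hsgn i hia hib).1).mp hneg)
    have hz := (Finset.sum_eq_zero_iff_of_nonpos hnp).mp key j ((hmem j).mpr ⟨hja, hjb⟩)
    have := ((hsgn j hja hjb).2).mpr hlt
    rw [hz] at this
    exact lt_irrefl 0 this
end

section
/- For a 5-body planar central configuration whose convex hull is the triangle q_1 q_2 q_3, with q_4, q_5 interior points labeled so that q_1, q_2, q_5, q_4 in counterclockwise order form a convex quadrilateral, the following distance inequalities hold: r_{15} > r_{45}, r_{24} > r_{45}, r_{15} > r_{14}, r_{24} > r_{25}, r_{13} > r_{14}, r_{23} > r_{25}. -/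
open Finset

lemma distsq (x y : EuclideanSpace ℝ (Fin 2)) :
    dist x y ^ 2 = (x 0 - y 0)^2 + (x 1 - y 1)^2 := by
  rw [EuclideanSpace.dist_eq, Real.sq_sqrt (by positivity)]
  simp [Fin.sum_univ_two, Real.dist_eq, sq_abs]

lemma coordsq_pos (x y : EuclideanSpace ℝ (Fin 2)) (h : x ≠ y) :
    0 < (y 0 - x 0)^2 + (y 1 - x 1)^2 := by
  rcases lt_or_eq_of_le (by positivity : (0:ℝ) ≤ (y 0 - x 0)^2 + (y 1 - x 1)^2) with h1 | h1
  · exact h1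
  · exfalso; apply h
    have c0 : x 0 = y 0 := by nlinarith [sq_nonneg (y 0 - x 0), sq_nonneg (y 1 - x 1)]
    have c1 : x 1 = y 1 := by nlinarith [sq_nonneg (y 0 - x 0), sq_nonneg (y 1 - x 1)]
    ext t
    fin_cases t <;> simpa

lemma lemA (a b c p : EuclideanSpace ℝ (Fin 2)) (g0 g1 g2 : ℝ)
    (hg : 0 < g1^2 + g2^2)
    (hp : p ∈ interior (convexHull ℝ ({a, b, c} : Set (EuclideanSpace ℝ (Fin 2)))))
    (hp0 : g0 + g1 * p 0 + g2 * p 1 = 0)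
    (ha : g0 + g1 * a 0 + g2 * a 1 ≤ 0)
    (hb : g0 + g1 * b 0 + g2 * b 1 ≤ 0)
    (hc : g0 + g1 * c 0 + g2 * c 1 ≤ 0) : False := by
  classical
  set S : Set (EuclideanSpace ℝ (Fin 2)) := {z | g0 + g1 * z 0 + g2 * z 1 ≤ 0} with hS
  have hconv : Convex ℝ S := by
    intro x hx y hy s t hs ht hst
    simp only [hS, Set.mem_setOf_eq] at hx hy ⊢
    have e0 : (s • x + t • y) 0 = s * x 0 + t * y 0 := by simp
    have e1 : (s • x + t • y) 1 = s * x 1 + t * y 1 := by simp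
    rw [e0, e1]
    have k1 : s * (g0 + g1 * x 0 + g2 * x 1) ≤ 0 := mul_nonpos_of_nonneg_of_nonpos hs hx
    have k2 : t * (g0 + g1 * y 0 + g2 * y 1) ≤ 0 := mul_nonpos_of_nonneg_of_nonpos ht hy
    have k3 : g0 * (s + t) = g0 := by rw [hst]; ring
    nlinarith [k1, k2, k3]
  have hsub : convexHull ℝ ({a, b, c} : Set (EuclideanSpace ℝ (Fin 2))) ⊆ S := by
    apply convexHull_min _ hconv
    intro z hz
    simp only [Set.mem_insert_iff, Set.mem_singleton_iff] at hz
    rcases hz with rfl | rfl | rfl <;> assumption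
  rw [mem_interior_iff_mem_nhds, Metric.mem_nhds_iff] at hp
  obtain ⟨ε, hε, hball⟩ := hp
  set v : EuclideanSpace ℝ (Fin 2) :=
    g1 • EuclideanSpace.single 0 (1:ℝ) + g2 • EuclideanSpace.single 1 (1:ℝ) with hv
  have hv0 : v 0 = g1 := by simp [hv, EuclideanSpace.single_apply]
  have hv1 : v 1 = g2 := by simp [hv, EuclideanSpace.single_apply]
  have hvnorm : 0 < ‖v‖ := by
    rw [norm_pos_iff]
    intro h0
    have z0 : v 0 = 0 := by rw [h0]; rfl
    have z1 : v 1 = 0 := by rw [h0]; rfl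
    rw [hv0] at z0; rw [hv1] at z1
    nlinarith
  set δ : ℝ := ε / (2 * ‖v‖) with hδ
  have hδpos : 0 < δ := by positivity
  have hmem : p + δ • v ∈ Metric.ball p ε := by
    rw [Metric.mem_ball, dist_eq_norm, add_sub_cancel_left, norm_smul, Real.norm_eq_abs,
      abs_of_pos hδpos, hδ]
    rw [div_mul_eq_mul_div, mul_comm]
    rw [div_lt_iff₀ (by positivity)]
    nlinarith
  have hz := hsub (hball hmem)
  simp only [hS, Set.mem_setOf_eq] at hz
  have e0 : (p + δ • v) 0 = p 0 + δ * g1 := by simp [hv0]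
  have e1 : (p + δ • v) 1 = p 1 + δ * g2 := by simp [hv1]
  rw [e0, e1] at hz
  nlinarith

lemma hull_bis (a b c p s : EuclideanSpace ℝ (Fin 2))
    (hp : p ∈ interior (convexHull ℝ ({a, b, c} : Set (EuclideanSpace ℝ (Fin 2)))))
    (hps : p ≠ s)
    (hA : dist a s ≤ dist a p) (hB : dist b s ≤ dist b p) (hC : dist c s ≤ dist c p) :
    False := by
  apply lemA a b c p ((s 0^2 + s 1^2 - p 0^2 - p 1^2) - dist p s ^ 2)
    (2*(p 0 - s 0)) (2*(p 1 - s 1))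
  · have := coordsq_pos s p (fun h => hps h.symm)
    nlinarith [this]
  · exact hp
  · rw [distsq]; ring
  · have h1 : dist a s ^ 2 ≤ dist a p ^ 2 := pow_le_pow_left₀ dist_nonneg hA 2
    rw [distsq, distsq] at h1
    have h2 : (0:ℝ) ≤ dist p s ^ 2 := by positivity
    nlinarith [h1, h2]
  · have h1 : dist b s ^ 2 ≤ dist b p ^ 2 := pow_le_pow_left₀ dist_nonneg hB 2
    rw [distsq, distsq] at h1
    have h2 : (0:ℝ) ≤ dist p s ^ 2 := by positivity
    nlinarith [h1, h2]
  · have h1 : dist c s ^ 2 ≤ dist c p ^ 2 := pow_le_pow_left₀ dist_nonneg hC 2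
    rw [distsq, distsq] at h1
    have h2 : (0:ℝ) ≤ dist p s ^ 2 := by positivity
    nlinarith [h1, h2]

set_option maxHeartbeats 1000000 in
lemma geo2 (L0 L1 R0 R1 u0 u1 v0 v1 : ℝ)
    (hw : 0 < (R0-L0)^2 + (R1-L1)^2)
    (hYu : (R0-L0)*(u1-L1) - (R1-L1)*(u0-L0) < 0)
    (hYv : (R0-L0)*(v1-L1) - (R1-L1)*(v0-L0) < 0)
    (h1 : 0 < (u0-L0)*(v1-u1) - (u1-L1)*(v0-u0))
    (h2 : 0 < (v0-u0)*(R1-v1) - (v1-u1)*(R0-v0))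
    (hku : (u0-R0)^2+(u1-R1)^2 ≤ (u0-L0)^2+(u1-L1)^2)
    (hkv : (v0-L0)^2+(v1-L1)^2 ≤ (v0-R0)^2+(v1-R1)^2) : False := by
  set W2 : ℝ := (R0-L0)^2 + (R1-L1)^2 with hW2
  set Xu : ℝ := (R0-L0)*(u0-L0) + (R1-L1)*(u1-L1) with hXu
  set Yu : ℝ := (R0-L0)*(u1-L1) - (R1-L1)*(u0-L0) with hYu'
  set Xv : ℝ := (R0-L0)*(v0-L0) + (R1-L1)*(v1-L1) with hXv
  set Yv : ℝ := (R0-L0)*(v1-L1) - (R1-L1)*(v0-L0) with hYv'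
  have hXule : W2 ≤ 2*Xu := by rw [hW2, hXu]; nlinarith [hku]
  have hXvle : 2*Xv ≤ W2 := by rw [hW2, hXv]; nlinarith [hkv]
  have id1 : W2 * ((u0-L0)*(v1-u1) - (u1-L1)*(v0-u0)) = Xu*(Yv-Yu) - (Xv-Xu)*Yu := by
    rw [hW2, hXu, hYu', hXv, hYv']; ring
  have id2 : W2 * ((v0-u0)*(R1-v1)-(v1-u1)*(R0-v0)) = Yv*(Xu-Xv) - (W2-Xv)*(Yv-Yu) := by
    rw [hW2, hXu, hYu', hXv, hYv']; ring
  have hXupos : 0 < Xu := by linarith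
  have k1 : (Xu - Xv) * Yu ≤ 0 := mul_nonpos_of_nonneg_of_nonpos (by linarith) (le_of_lt hYu)
  have e1pos : 0 < W2 * ((u0-L0)*(v1-u1) - (u1-L1)*(v0-u0)) := mul_pos hw h1
  have hP : 0 < Xu * (Yv - Yu) := by linarith [e1pos, id1, k1]
  have hYvYu : 0 < Yv - Yu := by
    by_contra hle
    push_neg at hle
    linarith [mul_nonpos_of_nonneg_of_nonpos (le_of_lt hXupos) hle, hP]
  have e2pos : 0 < W2 * ((v0-u0)*(R1-v1)-(v1-u1)*(R0-v0)) := mul_pos hw h2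
  have t1 : Yv * (Xu - Xv) ≤ 0 := mul_nonpos_of_nonpos_of_nonneg (le_of_lt hYv) (by linarith)
  have t2 : 0 < (W2 - Xv) * (Yv - Yu) := mul_pos (by linarith) hYvYu
  linarith [id2, t1, t2, e2pos]

set_option maxHeartbeats 1000000 in
lemma geo3 (c0 c1 d0 d1 a0 a1 e0 e1 : ℝ)
    (hw : 0 < (d0-c0)^2+(d1-c1)^2)
    (hYa : (d0-c0)*(a1-c1) - (d1-c1)*(a0-c0) < 0)
    (hYe : 0 < (d0-c0)*(e1-c1) - (d1-c1)*(e0-c0))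
    (hka : (a0-c0)^2+(a1-c1)^2 ≤ (a0-d0)^2+(a1-d1)^2)
    (hke : (e0-c0)^2+(e1-c1)^2 < (e0-d0)^2+(e1-d1)^2)
    (h3 : 0 < (d0-e0)*(a1-d1) - (d1-e1)*(a0-d0)) : False := by
  set W2 : ℝ := (d0-c0)^2+(d1-c1)^2 with hW2
  set Xa : ℝ := (d0-c0)*(a0-c0)+(d1-c1)*(a1-c1) with hXa
  set Ya : ℝ := (d0-c0)*(a1-c1) - (d1-c1)*(a0-c0) with hYa'
  set Xe : ℝ := (d0-c0)*(e0-c0)+(d1-c1)*(e1-c1) with hXe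
  set Ye : ℝ := (d0-c0)*(e1-c1) - (d1-c1)*(e0-c0) with hYe'
  have hXale : 2*Xa ≤ W2 := by rw [hW2, hXa]; nlinarith [hka]
  have hXelt : 2*Xe < W2 := by rw [hW2, hXe]; nlinarith [hke]
  have id : W2 * ((d0-e0)*(a1-d1) - (d1-e1)*(a0-d0)) = (W2-Xe)*Ya + Ye*(Xa-W2) := by
    rw [hW2, hXa, hYa', hXe, hYe']; ring
  have t1 : (W2-Xe)*Ya < 0 := mul_neg_of_pos_of_neg (by linarith) hYa
  have t2 : Ye*(Xa-W2) < 0 := mul_neg_of_pos_of_neg hYe (by linarith)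
  have e3 : 0 < W2 * ((d0-e0)*(a1-d1) - (d1-e1)*(a0-d0)) := mul_pos hw h3
  linarith [id, t1, t2, e3]

set_option maxHeartbeats 1000000 in
lemma geo3' (c0 c1 e0 e1 b0 b1 d0 d1 : ℝ)
    (hw : 0 < (e0-c0)^2+(e1-c1)^2)
    (hYb : 0 < (e0-c0)*(b1-c1) - (e1-c1)*(b0-c0))
    (hYd : (e0-c0)*(d1-c1) - (e1-c1)*(d0-c0) < 0)
    (hkb : (b0-c0)^2+(b1-c1)^2 ≤ (b0-e0)^2+(b1-e1)^2)
    (hkd : (d0-c0)^2+(d1-c1)^2 < (d0-e0)^2+(d1-e1)^2)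
    (h2 : 0 < (e0-b0)*(d1-e1) - (e1-b1)*(d0-e0)) : False := by
  set W2 : ℝ := (e0-c0)^2+(e1-c1)^2 with hW2
  set Xb : ℝ := (e0-c0)*(b0-c0)+(e1-c1)*(b1-c1) with hXb
  set Yb : ℝ := (e0-c0)*(b1-c1) - (e1-c1)*(b0-c0) with hYb'
  set Xd : ℝ := (e0-c0)*(d0-c0)+(e1-c1)*(d1-c1) with hXd
  set Yd : ℝ := (e0-c0)*(d1-c1) - (e1-c1)*(d0-c0) with hYd'
  have hXble : 2*Xb ≤ W2 := by rw [hW2, hXb]; nlinarith [hkb]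
  have hXdlt : 2*Xd < W2 := by rw [hW2, hXd]; nlinarith [hkd]
  have id : -(W2 * ((e0-b0)*(d1-e1) - (e1-b1)*(d0-e0))) = (W2-Xd)*Yb + Yd*(Xb-W2) := by
    rw [hW2, hXb, hYb', hXd, hYd']; ring
  have t1 : 0 < (W2-Xd)*Yb := mul_pos (by linarith) hYb
  have t2 : 0 < Yd*(Xb-W2) := mul_pos_of_neg_of_neg hYd (by linarith)
  have e2 : 0 < W2 * ((e0-b0)*(d1-e1) - (e1-b1)*(d0-e0)) := mul_pos hw h2
  linarith [id, t1, t2, e2]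

lemma Rle {x y : ℝ} (hx : 0 < x) (h : x ≤ y) : 1/y^3 ≤ 1/x^3 := by
  apply one_div_le_one_div_of_le (by positivity)
  exact pow_le_pow_left₀ (le_of_lt hx) h 3

lemma Rlt {x y : ℝ} (hx : 0 < x) (h : x < y) : 1/y^3 < 1/x^3 := by
  apply one_div_lt_one_div_of_lt (by positivity)
  exact pow_lt_pow_left₀ h (le_of_lt hx) (by norm_num)

lemma Rrev {x y : ℝ} (hx : 0 < x) (hy : 0 < y) (h : 1/x^3 < 1/y^3) : y < x := by
  by_contra hle
  push_neg at hle
  linarith [Rle hx hle]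

lemma tpos {m r s : ℝ} (hm : 0 < m) (hr : r < 0) (hs : s < 0) : 0 < m*r*s := by
  linarith [mul_pos (mul_pos hm (neg_pos.2 hr)) (neg_pos.2 hs)]
lemma tpos' {m r s : ℝ} (hm : 0 < m) (hr : 0 < r) (hs : 0 < s) : 0 < m*r*s := by
  linarith [mul_pos (mul_pos hm hr) hs]
lemma tneg {m r s : ℝ} (hm : 0 < m) (hr : 0 < r) (hs : s < 0) : m*r*s < 0 := by
  linarith [mul_pos (mul_pos hm hr) (neg_pos.2 hs)]
lemma tneg' {m r s : ℝ} (hm : 0 < m) (hr : r < 0) (hs : 0 < s) : m*r*s < 0 := by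
  linarith [mul_pos (mul_pos hm (neg_pos.2 hr)) hs]
lemma tnn {m r s : ℝ} (hm : 0 < m) (hr : 0 ≤ r) (hs : 0 < s) : 0 ≤ m*r*s := by
  linarith [mul_nonneg (mul_nonneg hm.le hr) hs.le]
lemma tnn' {m r s : ℝ} (hm : 0 < m) (hr : r ≤ 0) (hs : s < 0) : 0 ≤ m*r*s := by
  linarith [mul_nonneg (mul_nonneg hm.le (neg_nonneg.2 hr)) (neg_nonneg.2 hs.le)]
lemma tnp {m r s : ℝ} (hm : 0 < m) (hr : 0 ≤ r) (hs : s < 0) : m*r*s ≤ 0 := by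
  linarith [mul_nonneg (mul_nonneg hm.le hr) (neg_nonneg.2 hs.le)]
lemma tnp' {m r s : ℝ} (hm : 0 < m) (hr : r ≤ 0) (hs : 0 < s) : m*r*s ≤ 0 := by
  linarith [mul_nonneg (mul_nonneg hm.le (neg_nonneg.2 hr)) hs.le]

lemma fpos' {m r s : ℝ} (hm : 0 < m) (hs : s < 0) (h : m*r*s < 0) : 0 < r := by
  by_contra h'; push_neg at h'
  linarith [tnn' hm h' hs]

lemma fneg' {m r s : ℝ} (hm : 0 < m) (hs : s < 0) (h : 0 < m*r*s) : r < 0 := by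
  by_contra h'; push_neg at h'
  linarith [tnp hm h' hs]

lemma fneg {m r s : ℝ} (hm : 0 < m) (hs : 0 < s) (h : m*r*s < 0) : r < 0 := by
  by_contra h'; push_neg at h'
  linarith [tnn hm h' hs]

lemma fpos {m r s : ℝ} (hm : 0 < m) (hs : 0 < s) (h : 0 < m*r*s) : 0 < r := by
  by_contra h'; push_neg at h'
  linarith [tnp' hm h' hs]
set_option maxHeartbeats 2000000 in
/-- Distance inequalities for a 5-body planar central configuration whose convex
hull is the triangle `q 0 q 1 q 2`, with the interior points `q 3`, `q 4` labeled so
that `q 0, q 1, q 4, q 3` is a convex quadrilateral in counterclockwise order.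
(Bodies 1,2,3,4,5 of the paper are `q 0,…,q 4`.)  Conclusions:
`r₁₅>r₄₅`, `r₂₄>r₄₅`, `r₁₅>r₁₄`, `r₂₄>r₂₅`, `r₁₃>r₁₄`, `r₂₃>r₂₅`. -/
theorem stmt14 (q : Fin 5 → EuclideanSpace ℝ (Fin 2)) (m : Fin 5 → ℝ)
    (lam : ℝ) (hm : ∀ i, 0 < m i) (hq : ∀ i j, i ≠ j → q i ≠ q j)
    (hcom : ∑ i, m i • q i = 0)
    (hcc : ∀ i, -(lam • q i)
      = ∑ j ∈ Finset.univ.erase i, (m j / dist (q i) (q j) ^ 3) • (q j - q i))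
    (h4 : q 3 ∈ interior (convexHull ℝ {q 0, q 1, q 2}))
    (h5 : q 4 ∈ interior (convexHull ℝ {q 0, q 1, q 2}))
    (hc1 : 0 < wedge (q 1 - q 0) (q 4 - q 1))
    (hc2 : 0 < wedge (q 4 - q 1) (q 3 - q 4))
    (hc3 : 0 < wedge (q 3 - q 4) (q 0 - q 3))
    (hc4 : 0 < wedge (q 0 - q 3) (q 1 - q 0)) :
    dist (q 0) (q 4) > dist (q 3) (q 4) ∧
    dist (q 1) (q 3) > dist (q 3) (q 4) ∧
    dist (q 0) (q 4) > dist (q 0) (q 3) ∧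
    dist (q 1) (q 3) > dist (q 1) (q 4) ∧
    dist (q 0) (q 2) > dist (q 0) (q 3) ∧
    dist (q 1) (q 2) > dist (q 1) (q 4) := by
  have dp : ∀ i j : Fin 5, i ≠ j → 0 < dist (q i) (q j) := fun i j h => dist_pos.2 (hq i j h)
  simp only [wedge, PiLp.sub_apply] at hc1 hc2 hc3 hc4
  have comp : ∀ (i : Fin 5) (t : Fin 2), -(lam * q i t)
      = (m 0 / dist (q i) (q 0) ^ 3) * (q 0 t - q i t)
      + (m 1 / dist (q i) (q 1) ^ 3) * (q 1 t - q i t)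
      + (m 2 / dist (q i) (q 2) ^ 3) * (q 2 t - q i t)
      + (m 3 / dist (q i) (q 3) ^ 3) * (q 3 t - q i t)
      + (m 4 / dist (q i) (q 4) ^ 3) * (q 4 t - q i t) := by
    intro i t
    have h := hcc i
    rw [Finset.sum_erase _ (by rw [sub_self, smul_zero]), Fin.sum_univ_five] at h
    have h2 := congrArg (fun v : EuclideanSpace ℝ (Fin 2) => v t) h
    simp only [PiLp.add_apply, PiLp.smul_apply, PiLp.sub_apply, PiLp.neg_apply,
      smul_eq_mul] at h2
    exact h2
  have and34 : m 0 * (1/dist (q 3) (q 0) ^ 3 - 1/dist (q 4) (q 0) ^ 3) * ((q 4 0 - q 3 0)*(q 0 1 - q 3 1) - (q 4 1 - q 3 1)*(q 0 0 - q 3 0)) + m 1 * (1/dist (q 3) (q 1) ^ 3 - 1/dist (q 4) (q 1) ^ 3) * ((q 4 0 - q 3 0)*(q 1 1 - q 3 1) - (q 4 1 - q 3 1)*(q 1 0 - q 3 0)) + m 2 * (1/dist (q 3) (q 2) ^ 3 - 1/dist (q 4) (q 2) ^ 3) * ((q 4 0 - q 3 0)*(q 2 1 - q 3 1) - (q 4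 1 - q 3 1)*(q 2 0 - q 3 0)) = 0 := by
    linear_combination (q 4 1 - q 3 1) * (comp 3 0) - (q 4 0 - q 3 0) * (comp 3 1) + (q 4 0 - q 3 0) * (comp 4 1) - (q 4 1 - q 3 1) * (comp 4 0)
  have and03 : m 1 * (1/dist (q 0) (q 1) ^ 3 - 1/dist (q 3) (q 1) ^ 3) * ((q 3 0 - q 0 0)*(q 1 1 - q 0 1) - (q 3 1 - q 0 1)*(q 1 0 - q 0 0)) + m 2 * (1/dist (q 0) (q 2) ^ 3 - 1/dist (q 3) (q 2) ^ 3) * ((q 3 0 - q 0 0)*(q 2 1 - q 0 1) - (q 3 1 - q 0 1)*(q 2 0 - q 0 0)) + m 4 * (1/dist (q 0) (q 4) ^ 3 - 1/dist (q 3) (q 4) ^ 3) * ((q 3 0 - q 0 0)*(q 4 1 - q 0 1) - (q 3 1 - q 0 1)*(q 4 0 - q 0 0)) = 0 := by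
    linear_combination (q 3 1 - q 0 1) * (comp 0 0) - (q 3 0 - q 0 0) * (comp 0 1) + (q 3 0 - q 0 0) * (comp 3 1) - (q 3 1 - q 0 1) * (comp 3 0)
  have and14 : m 0 * (1/dist (q 1) (q 0) ^ 3 - 1/dist (q 4) (q 0) ^ 3) * ((q 4 0 - q 1 0)*(q 0 1 - q 1 1) - (q 4 1 - q 1 1)*(q 0 0 - q 1 0)) + m 2 * (1/dist (q 1) (q 2) ^ 3 - 1/dist (q 4) (q 2) ^ 3) * ((q 4 0 - q 1 0)*(q 2 1 - q 1 1) - (q 4 1 - q 1 1)*(q 2 0 - q 1 0)) + m 3 * (1/dist (q 1) (q 3) ^ 3 - 1/dist (q 4) (q 3) ^ 3) * ((q 4 0 - q 1 0)*(q 3 1 - q 1 1) - (q 4 1 - q 1 1)*(q 3 0 - q 1 0)) = 0 := by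
    linear_combination (q 4 1 - q 1 1) * (comp 1 0) - (q 4 0 - q 1 0) * (comp 1 1) + (q 4 0 - q 1 0) * (comp 4 1) - (q 4 1 - q 1 1) * (comp 4 0)
  have and23 : m 0 * (1/dist (q 2) (q 0) ^ 3 - 1/dist (q 3) (q 0) ^ 3) * ((q 3 0 - q 2 0)*(q 0 1 - q 2 1) - (q 3 1 - q 2 1)*(q 0 0 - q 2 0)) + m 1 * (1/dist (q 2) (q 1) ^ 3 - 1/dist (q 3) (q 1) ^ 3) * ((q 3 0 - q 2 0)*(q 1 1 - q 2 1) - (q 3 1 - q 2 1)*(q 1 0 - q 2 0)) + m 4 * (1/dist (q 2) (q 4) ^ 3 - 1/dist (q 3) (q 4) ^ 3) * ((q 3 0 - q 2 0)*(q 4 1 - q 2 1) - (q 3 1 - q 2 1)*(q 4 0 - q 2 0)) = 0 := by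
    linear_combination (q 3 1 - q 2 1) * (comp 2 0) - (q 3 0 - q 2 0) * (comp 2 1) + (q 3 0 - q 2 0) * (comp 3 1) - (q 3 1 - q 2 1) * (comp 3 0)
  have and24 : m 0 * (1/dist (q 2) (q 0) ^ 3 - 1/dist (q 4) (q 0) ^ 3) * ((q 4 0 - q 2 0)*(q 0 1 - q 2 1) - (q 4 1 - q 2 1)*(q 0 0 - q 2 0)) + m 1 * (1/dist (q 2) (q 1) ^ 3 - 1/dist (q 4) (q 1) ^ 3) * ((q 4 0 - q 2 0)*(q 1 1 - q 2 1) - (q 4 1 - q 2 1)*(q 1 0 - q 2 0)) + m 3 * (1/dist (q 2) (q 3) ^ 3 - 1/dist (q 4) (q 3) ^ 3) * ((q 4 0 - q 2 0)*(q 3 1 - q 2 1) - (q 4 1 - q 2 1)*(q 3 0 - q 2 0)) = 0 := by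
    linear_combination (q 4 1 - q 2 1) * (comp 2 0) - (q 4 0 - q 2 0) * (comp 2 1) + (q 4 0 - q 2 0) * (comp 4 1) - (q 4 1 - q 2 1) * (comp 4 0)
  have cs34 : 0 < (q 4 0 - q 3 0)^2 + (q 4 1 - q 3 1)^2 := coordsq_pos _ _ (hq 3 4 (by decide))
  have cs03 : 0 < (q 3 0 - q 0 0)^2 + (q 3 1 - q 0 1)^2 := coordsq_pos _ _ (hq 0 3 (by decide))
  have cs14 : 0 < (q 4 0 - q 1 0)^2 + (q 4 1 - q 1 1)^2 := coordsq_pos _ _ (hq 1 4 (by decide))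
  have cs23 : 0 < (q 3 0 - q 2 0)^2 + (q 3 1 - q 2 1)^2 := coordsq_pos _ _ (hq 2 3 (by decide))
  have cs24 : 0 < (q 4 0 - q 2 0)^2 + (q 4 1 - q 2 1)^2 := coordsq_pos _ _ (hq 2 4 (by decide))
  have s340 : ((q 4 0 - q 3 0)*(q 0 1 - q 3 1) - (q 4 1 - q 3 1)*(q 0 0 - q 3 0)) < 0 := by linarith [hc3]
  have s341 : ((q 4 0 - q 3 0)*(q 1 1 - q 3 1) - (q 4 1 - q 3 1)*(q 1 0 - q 3 0)) < 0 := by linarith [hc2]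
  have s031 : ((q 3 0 - q 0 0)*(q 1 1 - q 0 1) - (q 3 1 - q 0 1)*(q 1 0 - q 0 0)) < 0 := by linarith [hc4]
  have s034 : ((q 3 0 - q 0 0)*(q 4 1 - q 0 1) - (q 3 1 - q 0 1)*(q 4 0 - q 0 0)) < 0 := by linarith [hc3]
  have s140 : 0 < ((q 4 0 - q 1 0)*(q 0 1 - q 1 1) - (q 4 1 - q 1 1)*(q 0 0 - q 1 0)) := by linarith [hc1]
  have s143 : 0 < ((q 4 0 - q 1 0)*(q 3 1 - q 1 1) - (q 4 1 - q 1 1)*(q 3 0 - q 1 0)) := by linarith [hc2]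
  have F1 : 0 < ((q 4 0 - q 3 0)*(q 2 1 - q 3 1) - (q 4 1 - q 3 1)*(q 2 0 - q 3 0)) := by
    by_contra hF; push_neg at hF
    exact lemA (q 0) (q 1) (q 2) (q 3)
      ((q 4 1 - q 3 1) * q 3 0 - (q 4 0 - q 3 0) * q 3 1) (-(q 4 1 - q 3 1)) (q 4 0 - q 3 0)
      (by linarith [cs34]) h4 (by ring) (by linarith [s340]) (by linarith [s341]) (by linarith [hF])
  have F2 : 0 < ((q 3 0 - q 0 0)*(q 2 1 - q 0 1) - (q 3 1 - q 0 1)*(q 2 0 - q 0 0)) := by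
    by_contra hF; push_neg at hF
    exact lemA (q 0) (q 1) (q 2) (q 3)
      ((q 3 1 - q 0 1) * q 0 0 - (q 3 0 - q 0 0) * q 0 1) (-(q 3 1 - q 0 1)) (q 3 0 - q 0 0)
      (by linarith [cs03]) h4 (by ring) (by linarith) (by linarith [s031]) (by linarith [hF])
  have F3 : ((q 4 0 - q 1 0)*(q 2 1 - q 1 1) - (q 4 1 - q 1 1)*(q 2 0 - q 1 0)) < 0 := by
    by_contra hF; push_neg at hF
    exact lemA (q 0) (q 1) (q 2) (q 4)
      ((q 4 0 - q 1 0) * q 1 1 - (q 4 1 - q 1 1) * q 1 0) (q 4 1 - q 1 1) (-(q 4 0 - q 1 0))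
      (by linarith [cs14]) h5 (by ring) (by linarith [s140]) (by linarith) (by linarith [hF])
  have s230 : ((q 3 0 - q 2 0)*(q 0 1 - q 2 1) - (q 3 1 - q 2 1)*(q 0 0 - q 2 0)) < 0 := by linarith [F2]
  have s231 : 0 < ((q 3 0 - q 2 0)*(q 1 1 - q 2 1) - (q 3 1 - q 2 1)*(q 1 0 - q 2 0)) := by
    by_contra hF; push_neg at hF
    exact lemA (q 0) (q 1) (q 2) (q 3)
      ((q 3 1 - q 2 1) * q 2 0 - (q 3 0 - q 2 0) * q 2 1) (-(q 3 1 - q 2 1)) (q 3 0 - q 2 0)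
      (by linarith [cs23]) h4 (by ring) (by linarith [s230]) (by linarith [hF]) (by linarith)
  have s234 : 0 < ((q 3 0 - q 2 0)*(q 4 1 - q 2 1) - (q 3 1 - q 2 1)*(q 4 0 - q 2 0)) := by linarith [F1]
  have s241 : 0 < ((q 4 0 - q 2 0)*(q 1 1 - q 2 1) - (q 4 1 - q 2 1)*(q 1 0 - q 2 0)) := by linarith [F3]
  have s240 : ((q 4 0 - q 2 0)*(q 0 1 - q 2 1) - (q 4 1 - q 2 1)*(q 0 0 - q 2 0)) < 0 := by
    by_contra hF; push_neg at hF
    exact lemA (q 0) (q 1) (q 2) (q 4)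
      ((q 4 0 - q 2 0) * q 2 1 - (q 4 1 - q 2 1) * q 2 0) (q 4 1 - q 2 1) (-(q 4 0 - q 2 0))
      (by linarith [cs24]) h5 (by ring) (by linarith [hF]) (by linarith [s241]) (by linarith)
  have s243 : ((q 4 0 - q 2 0)*(q 3 1 - q 2 1) - (q 4 1 - q 2 1)*(q 3 0 - q 2 0)) < 0 := by linarith [F1]
  have g3 : dist (q 0) (q 4) > dist (q 0) (q 3) := by
    by_contra hng; push_neg at hng
    have hsq0 : (q 0 0 - q 4 0)^2 + (q 0 1 - q 4 1)^2 ≤ (q 0 0 - q 3 0)^2 + (q 0 1 - q 3 1)^2 := by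
      have h1 := pow_le_pow_left₀ dist_nonneg hng 2
      rw [distsq, distsq] at h1; linarith
    have hb4 : dist (q 1) (q 4) < dist (q 1) (q 3) := by
      by_contra hb'; push_neg at hb'
      have hsqb : (q 1 0 - q 3 0)^2 + (q 1 1 - q 3 1)^2 ≤ (q 1 0 - q 4 0)^2 + (q 1 1 - q 4 1)^2 := by
        have h1 := pow_le_pow_left₀ dist_nonneg hb' 2
        rw [distsq, distsq] at h1; linarith
      exact geo2 (q 3 0) (q 3 1) (q 4 0) (q 4 1) (q 0 0) (q 0 1) (q 1 0) (q 1 1)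
        (by linarith [cs34]) (by linarith [s340]) (by linarith [s341])
        (by linarith [hc4]) (by linarith [hc1]) (by linarith [hsq0]) (by linarith [hsqb])
    have r0 : 1/dist (q 3) (q 0) ^ 3 - 1/dist (q 4) (q 0) ^ 3 ≤ 0 := by
      have h1 : dist (q 4) (q 0) ≤ dist (q 3) (q 0) := by
        rw [dist_comm (q 4) (q 0), dist_comm (q 3) (q 0)]; exact hng
      linarith [Rle (dp 4 0 (by decide)) h1]
    have r1 : 1/dist (q 3) (q 1) ^ 3 - 1/dist (q 4) (q 1) ^ 3 < 0 := by
      have h1 : dist (q 4) (q 1) < dist (q 3) (q 1) := by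
        rw [dist_comm (q 4) (q 1), dist_comm (q 3) (q 1)]; exact hb4
      linarith [Rlt (dp 4 1 (by decide)) h1]
    have t0 : 0 ≤ m 0 * (1/dist (q 3) (q 0) ^ 3 - 1/dist (q 4) (q 0) ^ 3) * ((q 4 0 - q 3 0)*(q 0 1 - q 3 1) - (q 4 1 - q 3 1)*(q 0 0 - q 3 0)) := tnn' (hm 0) r0 s340
    have t1 : 0 < m 1 * (1/dist (q 3) (q 1) ^ 3 - 1/dist (q 4) (q 1) ^ 3) * ((q 4 0 - q 3 0)*(q 1 1 - q 3 1) - (q 4 1 - q 3 1)*(q 1 0 - q 3 0)) := tpos (hm 1) r1 s341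
    have t2 : m 2 * (1/dist (q 3) (q 2) ^ 3 - 1/dist (q 4) (q 2) ^ 3) * ((q 4 0 - q 3 0)*(q 2 1 - q 3 1) - (q 4 1 - q 3 1)*(q 2 0 - q 3 0)) < 0 := by linarith [and34, t0, t1]
    have r2 : 1/dist (q 3) (q 2) ^ 3 - 1/dist (q 4) (q 2) ^ 3 < 0 := fneg (hm 2) F1 t2
    have h2 : dist (q 4) (q 2) < dist (q 3) (q 2) :=
      Rrev (dp 3 2 (by decide)) (dp 4 2 (by decide)) (by linarith [r2])
    exact hull_bis (q 0) (q 1) (q 2) (q 3) (q 4) h4 (hq 3 4 (by decide)) hng (le_of_lt hb4)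
      (by rw [dist_comm (q 2) (q 4), dist_comm (q 2) (q 3)]; exact le_of_lt h2)
  have g4 : dist (q 1) (q 3) > dist (q 1) (q 4) := by
    by_contra hng; push_neg at hng
    have r0 : 0 < 1/dist (q 3) (q 0) ^ 3 - 1/dist (q 4) (q 0) ^ 3 := by
      have h1 : dist (q 3) (q 0) < dist (q 4) (q 0) := by
        rw [dist_comm (q 3) (q 0), dist_comm (q 4) (q 0)]; exact g3
      linarith [Rlt (dp 3 0 (by decide)) h1]
    have r1 : 0 ≤ 1/dist (q 3) (q 1) ^ 3 - 1/dist (q 4) (q 1) ^ 3 := by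
      have h1 : dist (q 3) (q 1) ≤ dist (q 4) (q 1) := by
        rw [dist_comm (q 3) (q 1), dist_comm (q 4) (q 1)]; exact hng
      linarith [Rle (dp 3 1 (by decide)) h1]
    have t0 : m 0 * (1/dist (q 3) (q 0) ^ 3 - 1/dist (q 4) (q 0) ^ 3) * ((q 4 0 - q 3 0)*(q 0 1 - q 3 1) - (q 4 1 - q 3 1)*(q 0 0 - q 3 0)) < 0 := tneg (hm 0) r0 s340
    have t1 : m 1 * (1/dist (q 3) (q 1) ^ 3 - 1/dist (q 4) (q 1) ^ 3) * ((q 4 0 - q 3 0)*(q 1 1 - q 3 1) - (q 4 1 - q 3 1)*(q 1 0 - q 3 0)) ≤ 0 := tnp (hm 1) r1 s341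
    have t2 : 0 < m 2 * (1/dist (q 3) (q 2) ^ 3 - 1/dist (q 4) (q 2) ^ 3) * ((q 4 0 - q 3 0)*(q 2 1 - q 3 1) - (q 4 1 - q 3 1)*(q 2 0 - q 3 0)) := by linarith [and34, t0, t1]
    have r2 : 0 < 1/dist (q 3) (q 2) ^ 3 - 1/dist (q 4) (q 2) ^ 3 := fpos (hm 2) F1 t2
    have h2 : dist (q 3) (q 2) < dist (q 4) (q 2) :=
      Rrev (dp 4 2 (by decide)) (dp 3 2 (by decide)) (by linarith [r2])
    exact hull_bis (q 0) (q 1) (q 2) (q 4) (q 3) h5 (hq 4 3 (by decide)) (le_of_lt g3) hng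
      (by rw [dist_comm (q 2) (q 3), dist_comm (q 2) (q 4)]; exact le_of_lt h2)
  have g1 : dist (q 0) (q 4) > dist (q 3) (q 4) := by
    by_contra hng; push_neg at hng
    have hsqv : (q 4 0 - q 0 0)^2 + (q 4 1 - q 0 1)^2 ≤ (q 4 0 - q 3 0)^2 + (q 4 1 - q 3 1)^2 := by
      have h0 : dist (q 4) (q 0) ≤ dist (q 4) (q 3) := by
        rw [dist_comm (q 4) (q 0), dist_comm (q 4) (q 3)]; exact hng
      have h1 := pow_le_pow_left₀ dist_nonneg h0 2
      rw [distsq, distsq] at h1; linarith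
    have hb1 : dist (q 1) (q 0) < dist (q 1) (q 3) := by
      by_contra hb'; push_neg at hb'
      have hsqu : (q 1 0 - q 3 0)^2 + (q 1 1 - q 3 1)^2 ≤ (q 1 0 - q 0 0)^2 + (q 1 1 - q 0 1)^2 := by
        have h1 := pow_le_pow_left₀ dist_nonneg hb' 2
        rw [distsq, distsq] at h1; linarith
      exact geo2 (q 0 0) (q 0 1) (q 3 0) (q 3 1) (q 1 0) (q 1 1) (q 4 0) (q 4 1)
        (by linarith [cs03]) (by linarith [s031]) (by linarith [s034])
        (by linarith [hc1]) (by linarith [hc2]) (by linarith [hsqu]) (by linarith [hsqv])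
    have r1 : 0 < 1/dist (q 0) (q 1) ^ 3 - 1/dist (q 3) (q 1) ^ 3 := by
      have h1 : dist (q 0) (q 1) < dist (q 3) (q 1) := by
        rw [dist_comm (q 0) (q 1), dist_comm (q 3) (q 1)]; exact hb1
      linarith [Rlt (dp 0 1 (by decide)) h1]
    have r4 : 0 ≤ 1/dist (q 0) (q 4) ^ 3 - 1/dist (q 3) (q 4) ^ 3 := by
      linarith [Rle (dp 0 4 (by decide)) hng]
    have t1 : m 1 * (1/dist (q 0) (q 1) ^ 3 - 1/dist (q 3) (q 1) ^ 3) * ((q 3 0 - q 0 0)*(q 1 1 - q 0 1) - (q 3 1 - q 0 1)*(q 1 0 - q 0 0)) < 0 := tneg (hm 1) r1 s031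
    have t4 : m 4 * (1/dist (q 0) (q 4) ^ 3 - 1/dist (q 3) (q 4) ^ 3) * ((q 3 0 - q 0 0)*(q 4 1 - q 0 1) - (q 3 1 - q 0 1)*(q 4 0 - q 0 0)) ≤ 0 := tnp (hm 4) r4 s034
    have t2 : 0 < m 2 * (1/dist (q 0) (q 2) ^ 3 - 1/dist (q 3) (q 2) ^ 3) * ((q 3 0 - q 0 0)*(q 2 1 - q 0 1) - (q 3 1 - q 0 1)*(q 2 0 - q 0 0)) := by linarith [and03, t1, t4]
    have r2 : 0 < 1/dist (q 0) (q 2) ^ 3 - 1/dist (q 3) (q 2) ^ 3 := fpos (hm 2) F2 t2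
    have h2 : dist (q 0) (q 2) < dist (q 3) (q 2) :=
      Rrev (dp 3 2 (by decide)) (dp 0 2 (by decide)) (by linarith [r2])
    exact hull_bis (q 0) (q 1) (q 2) (q 3) (q 0) h4 (hq 3 0 (by decide))
      (by rw [dist_self]; exact dist_nonneg) (le_of_lt hb1)
      (by rw [dist_comm (q 2) (q 0), dist_comm (q 2) (q 3)]; exact le_of_lt h2)
  have g2 : dist (q 1) (q 3) > dist (q 3) (q 4) := by
    by_contra hng; push_neg at hng
    have hsqu : (q 3 0 - q 1 0)^2 + (q 3 1 - q 1 1)^2 ≤ (q 3 0 - q 4 0)^2 + (q 3 1 - q 4 1)^2 := by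
      have h0 : dist (q 3) (q 1) ≤ dist (q 3) (q 4) := by
        rw [dist_comm (q 3) (q 1)]; exact hng
      have h1 := pow_le_pow_left₀ dist_nonneg h0 2
      rw [distsq, distsq] at h1; linarith
    have ha2 : dist (q 0) (q 1) < dist (q 0) (q 4) := by
      by_contra hb'; push_neg at hb'
      have hsqv : (q 0 0 - q 4 0)^2 + (q 0 1 - q 4 1)^2 ≤ (q 0 0 - q 1 0)^2 + (q 0 1 - q 1 1)^2 := by
        have h1 := pow_le_pow_left₀ dist_nonneg hb' 2
        rw [distsq, distsq] at h1; linarith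
      exact geo2 (q 4 0) (q 4 1) (q 1 0) (q 1 1) (q 3 0) (q 3 1) (q 0 0) (q 0 1)
        (by linarith [cs14]) (by linarith [hc2]) (by linarith [hc1])
        (by linarith [hc3]) (by linarith [hc4]) (by linarith [hsqu]) (by linarith [hsqv])
    have r0 : 0 < 1/dist (q 1) (q 0) ^ 3 - 1/dist (q 4) (q 0) ^ 3 := by
      have h1 : dist (q 1) (q 0) < dist (q 4) (q 0) := by
        rw [dist_comm (q 1) (q 0), dist_comm (q 4) (q 0)]; exact ha2
      linarith [Rlt (dp 1 0 (by decide)) h1]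
    have r3 : 0 ≤ 1/dist (q 1) (q 3) ^ 3 - 1/dist (q 4) (q 3) ^ 3 := by
      have h1 : dist (q 1) (q 3) ≤ dist (q 4) (q 3) := by
        rw [dist_comm (q 4) (q 3)]; exact hng
      linarith [Rle (dp 1 3 (by decide)) h1]
    have t0 : 0 < m 0 * (1/dist (q 1) (q 0) ^ 3 - 1/dist (q 4) (q 0) ^ 3) * ((q 4 0 - q 1 0)*(q 0 1 - q 1 1) - (q 4 1 - q 1 1)*(q 0 0 - q 1 0)) := tpos' (hm 0) r0 s140
    have t3 : 0 ≤ m 3 * (1/dist (q 1) (q 3) ^ 3 - 1/dist (q 4) (q 3) ^ 3) * ((q 4 0 - q 1 0)*(q 3 1 - q 1 1) - (q 4 1 - q 1 1)*(q 3 0 - q 1 0)) := tnn (hm 3) r3 s143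
    have t2 : m 2 * (1/dist (q 1) (q 2) ^ 3 - 1/dist (q 4) (q 2) ^ 3) * ((q 4 0 - q 1 0)*(q 2 1 - q 1 1) - (q 4 1 - q 1 1)*(q 2 0 - q 1 0)) < 0 := by linarith [and14, t0, t3]
    have r2 : 0 < 1/dist (q 1) (q 2) ^ 3 - 1/dist (q 4) (q 2) ^ 3 := fpos' (hm 2) F3 t2
    have h2 : dist (q 1) (q 2) < dist (q 4) (q 2) :=
      Rrev (dp 4 2 (by decide)) (dp 1 2 (by decide)) (by linarith [r2])
    exact hull_bis (q 0) (q 1) (q 2) (q 4) (q 1) h5 (hq 4 1 (by decide))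
      (le_of_lt ha2) (by rw [dist_self]; exact dist_nonneg)
      (by rw [dist_comm (q 2) (q 1), dist_comm (q 2) (q 4)]; exact le_of_lt h2)
  have g5 : dist (q 0) (q 2) > dist (q 0) (q 3) := by
    by_contra hng; push_neg at hng
    have hb : dist (q 1) (q 3) < dist (q 1) (q 2) := by
      by_contra hb'; push_neg at hb'
      exact hull_bis (q 0) (q 1) (q 2) (q 3) (q 2) h4 (hq 3 2 (by decide))
        hng hb' (by rw [dist_self]; exact dist_nonneg)
    have hke : dist (q 4) (q 3) ≤ dist (q 4) (q 2) := by
      by_contra hke'; push_neg at hke'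
      have hsqa : (q 0 0 - q 2 0)^2 + (q 0 1 - q 2 1)^2 ≤ (q 0 0 - q 3 0)^2 + (q 0 1 - q 3 1)^2 := by
        have h1 := pow_le_pow_left₀ dist_nonneg hng 2
        rw [distsq, distsq] at h1; linarith
      have hsqe : (q 4 0 - q 2 0)^2 + (q 4 1 - q 2 1)^2 < (q 4 0 - q 3 0)^2 + (q 4 1 - q 3 1)^2 := by
        have h1 := pow_lt_pow_left₀ hke' dist_nonneg (by norm_num : (2:ℕ) ≠ 0)
        rw [distsq, distsq] at h1; linarith
      exact geo3 (q 2 0) (q 2 1) (q 3 0) (q 3 1) (q 0 0) (q 0 1) (q 4 0) (q 4 1)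
        (by linarith [cs23]) (by linarith [s230]) (by linarith [s234])
        (by linarith [hsqa]) (by linarith [hsqe]) (by linarith [hc3])
    have r0 : 0 ≤ 1/dist (q 2) (q 0) ^ 3 - 1/dist (q 3) (q 0) ^ 3 := by
      have h1 : dist (q 2) (q 0) ≤ dist (q 3) (q 0) := by
        rw [dist_comm (q 2) (q 0), dist_comm (q 3) (q 0)]; exact hng
      linarith [Rle (dp 2 0 (by decide)) h1]
    have r1 : 1/dist (q 2) (q 1) ^ 3 - 1/dist (q 3) (q 1) ^ 3 < 0 := by
      have h1 : dist (q 3) (q 1) < dist (q 2) (q 1) := by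
        rw [dist_comm (q 3) (q 1), dist_comm (q 2) (q 1)]; exact hb
      linarith [Rlt (dp 3 1 (by decide)) h1]
    have r4 : 1/dist (q 2) (q 4) ^ 3 - 1/dist (q 3) (q 4) ^ 3 ≤ 0 := by
      have h1 : dist (q 3) (q 4) ≤ dist (q 2) (q 4) := by
        rw [dist_comm (q 3) (q 4), dist_comm (q 2) (q 4)]; exact hke
      linarith [Rle (dp 3 4 (by decide)) h1]
    have t0 : m 0 * (1/dist (q 2) (q 0) ^ 3 - 1/dist (q 3) (q 0) ^ 3) * ((q 3 0 - q 2 0)*(q 0 1 - q 2 1) - (q 3 1 - q 2 1)*(q 0 0 - q 2 0)) ≤ 0 := tnp (hm 0) r0 s230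
    have t1 : m 1 * (1/dist (q 2) (q 1) ^ 3 - 1/dist (q 3) (q 1) ^ 3) * ((q 3 0 - q 2 0)*(q 1 1 - q 2 1) - (q 3 1 - q 2 1)*(q 1 0 - q 2 0)) < 0 := tneg' (hm 1) r1 s231
    have t4 : m 4 * (1/dist (q 2) (q 4) ^ 3 - 1/dist (q 3) (q 4) ^ 3) * ((q 3 0 - q 2 0)*(q 4 1 - q 2 1) - (q 3 1 - q 2 1)*(q 4 0 - q 2 0)) ≤ 0 := tnp' (hm 4) r4 s234
    linarith [and23, t0, t1, t4]
  have g6 : dist (q 1) (q 2) > dist (q 1) (q 4) := by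
    by_contra hng; push_neg at hng
    have ha : dist (q 0) (q 4) < dist (q 0) (q 2) := by
      by_contra ha'; push_neg at ha'
      exact hull_bis (q 0) (q 1) (q 2) (q 4) (q 2) h5 (hq 4 2 (by decide))
        ha' hng (by rw [dist_self]; exact dist_nonneg)
    have hkd : dist (q 3) (q 4) ≤ dist (q 3) (q 2) := by
      by_contra hkd'; push_neg at hkd'
      have hsqb : (q 1 0 - q 2 0)^2 + (q 1 1 - q 2 1)^2 ≤ (q 1 0 - q 4 0)^2 + (q 1 1 - q 4 1)^2 := by
        have h1 := pow_le_pow_left₀ dist_nonneg hng 2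
        rw [distsq, distsq] at h1; linarith
      have hsqd : (q 3 0 - q 2 0)^2 + (q 3 1 - q 2 1)^2 < (q 3 0 - q 4 0)^2 + (q 3 1 - q 4 1)^2 := by
        have h1 := pow_lt_pow_left₀ hkd' dist_nonneg (by norm_num : (2:ℕ) ≠ 0)
        rw [distsq, distsq] at h1; linarith
      exact geo3' (q 2 0) (q 2 1) (q 4 0) (q 4 1) (q 1 0) (q 1 1) (q 3 0) (q 3 1)
        (by linarith [cs24]) (by linarith [s241]) (by linarith [s243])
        (by linarith [hsqb]) (by linarith [hsqd]) (by linarith [hc2])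
    have r1 : 0 ≤ 1/dist (q 2) (q 1) ^ 3 - 1/dist (q 4) (q 1) ^ 3 := by
      have h1 : dist (q 2) (q 1) ≤ dist (q 4) (q 1) := by
        rw [dist_comm (q 2) (q 1), dist_comm (q 4) (q 1)]; exact hng
      linarith [Rle (dp 2 1 (by decide)) h1]
    have r0 : 1/dist (q 2) (q 0) ^ 3 - 1/dist (q 4) (q 0) ^ 3 < 0 := by
      have h1 : dist (q 4) (q 0) < dist (q 2) (q 0) := by
        rw [dist_comm (q 4) (q 0), dist_comm (q 2) (q 0)]; exact ha
      linarith [Rlt (dp 4 0 (by decide)) h1]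
    have r3 : 1/dist (q 2) (q 3) ^ 3 - 1/dist (q 4) (q 3) ^ 3 ≤ 0 := by
      have h1 : dist (q 4) (q 3) ≤ dist (q 2) (q 3) := by
        rw [dist_comm (q 4) (q 3), dist_comm (q 2) (q 3)]; exact hkd
      linarith [Rle (dp 4 3 (by decide)) h1]
    have t0 : 0 < m 0 * (1/dist (q 2) (q 0) ^ 3 - 1/dist (q 4) (q 0) ^ 3) * ((q 4 0 - q 2 0)*(q 0 1 - q 2 1) - (q 4 1 - q 2 1)*(q 0 0 - q 2 0)) := tpos (hm 0) r0 s240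
    have t1 : 0 ≤ m 1 * (1/dist (q 2) (q 1) ^ 3 - 1/dist (q 4) (q 1) ^ 3) * ((q 4 0 - q 2 0)*(q 1 1 - q 2 1) - (q 4 1 - q 2 1)*(q 1 0 - q 2 0)) := tnn (hm 1) r1 s241
    have t3 : 0 ≤ m 3 * (1/dist (q 2) (q 3) ^ 3 - 1/dist (q 4) (q 3) ^ 3) * ((q 4 0 - q 2 0)*(q 3 1 - q 2 1) - (q 4 1 - q 2 1)*(q 3 0 - q 2 0)) := tnn' (hm 3) r3 s243
    linarith [and24, t0, t1, t3]
  exact ⟨g1, g2, g3, g4, g5, g6⟩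
end

section
/- For a 5-body planar central configuration whose convex hull is the quadrilateral q_1 q_2 q_3 q_4 (vertices counterclockwise, q_5 interior), the diagonal satisfies r_{13} > r_{15}, and moreover r_{13} > r_{12} or r_{13} > r_{14}; the analogous statements hold under cyclic permutation of the indices 1,2,3,4. -/
open Finset

set_option maxHeartbeats 1000000

namespace Stmt16Aux

abbrev E2 := EuclideanSpace ℝ (Fin 2)

lemma sub_coord (x y : E2) (i : Fin 2) : (x - y) i = x i - y i := rfl
lemma smul_coord (c : ℝ) (x : E2) (i : Fin 2) : (c • x) i = c * x i := rfl
lemma neg_coord (x : E2) (i : Fin 2) : (-x) i = -(x i) := rfl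

lemma sum_coord (s : Finset (Fin 5)) (f : Fin 5 → E2) (i : Fin 2) :
    (∑ j ∈ s, f j) i = ∑ j ∈ s, f j i := by
  induction s using Finset.cons_induction with
  | empty => rfl
  | cons a s ha ih => rw [Finset.sum_cons, Finset.sum_cons, ← ih]; rfl

/-- squared distance in coordinates -/
noncomputable def d2 (x y : E2) : ℝ := (x 0 - y 0)^2 + (x 1 - y 1)^2

lemma d2_nonneg (x y : E2) : 0 ≤ d2 x y := by unfold d2; positivity

lemma dist_eq_sqrt_d2 (x y : E2) : dist x y = Real.sqrt (d2 x y) := by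
  rw [EuclideanSpace.dist_eq, Fin.sum_univ_two]
  simp [d2, Real.dist_eq, sq_abs]

lemma dist_le_dist_iff {x y z w : E2} : dist x y ≤ dist z w ↔ d2 x y ≤ d2 z w := by
  rw [dist_eq_sqrt_d2, dist_eq_sqrt_d2]
  constructor
  · intro h
    nlinarith [Real.sq_sqrt (d2_nonneg x y), Real.sq_sqrt (d2_nonneg z w),
      Real.sqrt_nonneg (d2 x y), Real.sqrt_nonneg (d2 z w)]
  · exact fun h => Real.sqrt_le_sqrt h

lemma dist_lt_dist_iff {x y z w : E2} : dist x y < dist z w ↔ d2 x y < d2 z w := by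
  constructor
  · intro h; by_contra hc; push_neg at hc
    exact absurd (dist_le_dist_iff.2 hc) (not_le.2 h)
  · intro h; by_contra hc; push_neg at hc
    exact absurd (dist_le_dist_iff.1 hc) (not_le.2 h)

lemma inv_cube_le {r s : ℝ} (hr : 0 < r) (h : r ≤ s) : 1/s^3 ≤ 1/r^3 := by
  have hs : 0 < s := lt_of_lt_of_le hr h
  have : r^3 ≤ s^3 := by nlinarith [sq_nonneg r, sq_nonneg s, sq_nonneg (r+s), mul_pos hr hs]
  have h1 : 0 < r^3 := by positivity
  exact one_div_le_one_div_of_le h1 this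

lemma inv_cube_lt {r s : ℝ} (hr : 0 < r) (h : r < s) : 1/s^3 < 1/r^3 := by
  have hs : 0 < s := lt_trans hr h
  have : r^3 < s^3 := by nlinarith [sq_nonneg r, sq_nonneg s, sq_nonneg (r+s), mul_pos hr hs]
  have h1 : 0 < r^3 := by positivity
  exact one_div_lt_one_div_of_lt h1 this

/-- Key scalar lemma for claim II (auxiliary, ordered version). -/
lemma sl_key_aux (A p q g3 g4 : ℝ) (hA : 0 < A) (h3 : 0 < g3) (h4 : 0 < g4)
    (hC1 : 2*p*A ≤ p^2 + g4^2) (hC2 : 2*q*A ≤ q^2 + g3^2)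
    (hC3 : 0 < p*g3 + q*g4) (hC4 : p*g3 + q*g4 < A*(g3+g4)) (hg : g4 ≤ g3) :
    p*q ≤ g3*g4 := by
  by_contra hcon
  push_neg at hcon
  have hp : 0 < p := by
    rcases lt_trichotomy p 0 with h | h | h
    · have hq : q < 0 := by nlinarith [mul_pos h3 h4]
      nlinarith [mul_pos (neg_pos.2 h) h3, mul_pos (neg_pos.2 hq) h4]
    · nlinarith [mul_pos h3 h4]
    · exact h
  have k1 : 2*p*A*(g3+g4) ≤ (p^2+g4^2)*(g3+g4) := by nlinarith [add_pos h3 h4]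
  have k2 : 2*p*(p*g3+q*g4) < 2*p*A*(g3+g4) := by nlinarith
  have k3 : 2*p^2*g3 + 2*g3*g4^2 < 2*p*(p*g3+q*g4) := by nlinarith
  have k4 : (p^2+g4^2)*(g3+g4) ≤ 2*p^2*g3 + 2*g3*g4^2 := by nlinarith [sq_nonneg p, sq_nonneg g4]
  linarith

lemma sl_key (A p q g3 g4 : ℝ) (hA : 0 < A) (h3 : 0 < g3) (h4 : 0 < g4)
    (hC1 : 2*p*A ≤ p^2 + g4^2) (hC2 : 2*q*A ≤ q^2 + g3^2)
    (hC3 : 0 < p*g3 + q*g4) (hC4 : p*g3 + q*g4 < A*(g3+g4)) :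
    p*q ≤ g3*g4 := by
  rcases le_total g4 g3 with h | h
  · exact sl_key_aux A p q g3 g4 hA h3 h4 hC1 hC2 hC3 hC4 h
  · have := sl_key_aux A q p g4 g3 hA h4 h3 hC2 hC1 (by linarith) (by linarith) h
    linarith

/-- Scalar lemma for claim I, sublemma (ii), homogeneous form. -/
lemma sl_homog (C E t Γ Λ Δ : ℝ) (hC : 0 < C) (hE : 0 < E) (hdet : t^2 < C*E)
    (hΓ : 0 < Γ) (hΛ : 0 ≤ Λ) (hΔ : Γ + Λ < Δ)
    (hΨ : C*Δ^2 ≤ Γ^2*C + 2*Γ*Λ*t + Λ^2*E) :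
    Δ^2*(C - 2*t + E) - (Γ^2*C + 2*Γ*(Λ-Δ)*t + (Λ-Δ)^2*E) > 0 := by
  obtain ⟨G, hG⟩ : ∃ G, G = Δ^2*(C - 2*t + E) - (Γ^2*C + 2*Γ*(Λ-Δ)*t + (Λ-Δ)^2*E) := ⟨_, rfl⟩
  obtain ⟨P, hP⟩ : ∃ P, P = (Δ-Γ)*C - Λ*t := ⟨_, rfl⟩
  obtain ⟨Ψ, hΨdef⟩ : ∃ Ψ, Ψ = Γ^2*C + 2*Γ*Λ*t + Λ^2*E - C*Δ^2 := ⟨_, rfl⟩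
  rw [← hG]
  have hΨ0 : 0 ≤ Ψ := by rw [hΨdef]; linarith
  have hΔpos : 0 < Δ := by linarith
  have hΛpos : 0 < Λ := by
    rcases eq_or_lt_of_le hΛ with h | h
    · exfalso
      have : Γ^2 < Δ^2 := by nlinarith
      rw [← h] at hΨ; nlinarith
    · exact h
  have id1 : Λ*G = 2*(Δ+Γ)*Δ*P + (2*Δ-Λ)*Ψ := by rw [hG, hP, hΨdef]; ring
  have id2 : G*C = ((Δ+Γ)*C - (2*Δ-Λ)*t)*P + (2*Λ*Δ-Λ^2)*(E*C-t^2) := by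
    rw [hG, hP]; ring
  rcases lt_or_ge 0 P with hPpos | hPneg
  · -- case P > 0
    have h2 : 0 < 2*Δ - Λ := by linarith
    have : 0 < Λ*G := by
      rw [id1]
      have : 0 < 2*(Δ+Γ)*Δ*P := by positivity
      nlinarith
    by_contra hG0
    push_neg at hG0
    have h := mul_nonneg hΛpos.le (neg_nonneg.2 hG0)
    have heq : Λ*(-G) = -(Λ*G) := by ring
    rw [heq] at h
    linarith
  · -- case P ≤ 0
    have hDG : Λ < Δ - Γ := by linarith
    have ht : 0 < t := by nlinarith [mul_pos (by linarith : (0:ℝ) < Δ - Γ) hC]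
    have hkey : (Δ+Γ)*Λ ≤ (2*Δ-Λ)*(Δ-Γ) := by nlinarith
    have hP' : (Δ-Γ)*C ≤ Λ*t := by
      have : P ≤ 0 := hPneg
      rw [hP] at this; linarith
    have e1 : (Δ+Γ)*((Δ-Γ)*C) ≤ (Δ+Γ)*(Λ*t) :=
      mul_le_mul_of_nonneg_left hP' (by linarith)
    have e2 : ((Δ+Γ)*Λ)*t ≤ ((2*Δ-Λ)*(Δ-Γ))*t := mul_le_mul_of_nonneg_right hkey ht.le
    have e4 : (Δ-Γ) * ((Δ+Γ)*C) ≤ (Δ-Γ) * ((2*Δ-Λ)*t) := by nlinarith [e1, e2]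
    have hfac : (Δ+Γ)*C - (2*Δ-Λ)*t ≤ 0 := by
      have := le_of_mul_le_mul_left e4 (by linarith : (0:ℝ) < Δ-Γ)
      linarith
    have hGC : 0 < G*C := by
      rw [id2]
      have h := mul_nonneg (neg_nonneg.2 hfac) (neg_nonneg.2 hPneg)
      have heq : (-((Δ+Γ)*C - (2*Δ-Λ)*t))*(-P) = ((Δ+Γ)*C - (2*Δ-Λ)*t)*P := by ring
      rw [heq] at h
      have h2 : 0 < (2*Λ*Δ-Λ^2)*(E*C-t^2) := by
        apply mul_pos
        · have : 0 < Λ*(2*Δ-Λ) := mul_pos hΛpos (by linarith)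
          linarith [this]
        · linarith [hdet, mul_comm E C]
      linarith
    by_contra hG0
    push_neg at hG0
    have := mul_le_mul_of_nonneg_right hG0 hC.le
    simp at this
    linarith

/-- coordinate version: convex quad with |ab| ≥ |ac|, |ad| ≥ |ac| gives (b-c)·(d-c) ≤ 0. -/
lemma lem_key_coord (a0 a1 b0 b1 c0 c1 d0 d1 : ℝ)
    (hc1 : 0 < (b0-a0)*(c1-b1) - (b1-a1)*(c0-b0))
    (hc2 : 0 < (c0-b0)*(d1-c1) - (c1-b1)*(d0-c0))
    (hc3 : 0 < (d0-c0)*(a1-d1) - (d1-c1)*(a0-d0))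
    (hc4 : 0 < (a0-d0)*(b1-a1) - (a1-d1)*(b0-a0))
    (hab : (a0-c0)^2+(a1-c1)^2 ≤ (b0-a0)^2+(b1-a1)^2)
    (had : (a0-c0)^2+(a1-c1)^2 ≤ (d0-a0)^2+(d1-a1)^2) :
    (b0-c0)*(d0-c0) + (b1-c1)*(d1-c1) ≤ 0 := by
  obtain ⟨A, hA⟩ : ∃ A, A = (a0-c0)^2+(a1-c1)^2 := ⟨_, rfl⟩
  obtain ⟨p, hp⟩ : ∃ p, p = (a0-c0)*(d0-c0) + (a1-c1)*(d1-c1) := ⟨_, rfl⟩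
  obtain ⟨q, hq⟩ : ∃ q, q = (a0-c0)*(b0-c0) + (a1-c1)*(b1-c1) := ⟨_, rfl⟩
  obtain ⟨g3, h3⟩ : ∃ g, g = (a0-c0)*(b1-c1) - (a1-c1)*(b0-c0) := ⟨_, rfl⟩
  obtain ⟨g4, h4⟩ : ∃ g, g = (d0-c0)*(a1-c1) - (d1-c1)*(a0-c0) := ⟨_, rfl⟩
  have hg3 : 0 < g3 := by rw [h3]; linarith [hc1]
  have hg4 : 0 < g4 := by rw [h4]; linarith [hc3]
  have hApos : 0 < A := by
    rcases lt_or_ge 0 A with h | h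
    · exact h
    · exfalso
      have lag : g3^2 + q^2 = A * ((b0-c0)^2 + (b1-c1)^2) := by rw [h3, hq, hA]; ring
      have h0 : A ≤ 0 := h
      have h1 : A * ((b0-c0)^2 + (b1-c1)^2) ≤ 0 :=
        mul_nonpos_iff.2 (Or.inr ⟨h0, by positivity⟩)
      nlinarith [mul_pos hg3 hg3, sq_nonneg q]
  have lag_v : A*((d0-c0)^2+(d1-c1)^2) = p^2 + g4^2 := by rw [hA, hp, h4]; ring
  have lag_u : A*((b0-c0)^2+(b1-c1)^2) = q^2 + g3^2 := by rw [hA, hq, h3]; ring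
  have hv : 0 ≤ ((d0-c0)^2+(d1-c1)^2) - 2*p := by rw [hp]; linarith [had, hA.ge, hA.le]
  have hu : 0 ≤ ((b0-c0)^2+(b1-c1)^2) - 2*q := by rw [hq]; linarith [hab, hA.ge, hA.le]
  have hC1 : 2*p*A ≤ p^2 + g4^2 := by linarith [mul_nonneg hApos.le hv, lag_v]
  have hC2 : 2*q*A ≤ q^2 + g3^2 := by linarith [mul_nonneg hApos.le hu, lag_u]
  have hC3 : 0 < p*g3 + q*g4 := by
    have idc3 : p*g3 + q*g4 = A * ((c0-b0)*(d1-c1) - (c1-b1)*(d0-c0)) := by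
      rw [hp, hq, h3, h4, hA]; ring
    rw [idc3]; exact mul_pos hApos hc2
  have hC4 : p*g3 + q*g4 < A*(g3+g4) := by
    have idc4 : A*(g3+g4) - (p*g3 + q*g4) = A * ((a0-d0)*(b1-a1) - (a1-d1)*(b0-a0)) := by
      rw [hp, hq, h3, h4, hA]; ring
    linarith [mul_pos hApos hc4, idc4]
  have hfin := sl_key A p q g3 g4 hApos hg3 hg4 hC1 hC2 hC3 hC4
  have idfin : A*((b0-c0)*(d0-c0) + (b1-c1)*(d1-c1)) = p*q - g3*g4 := by
    rw [hp, hq, h3, h4, hA]; ring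
  by_contra hcon
  push_neg at hcon
  have := mul_pos hApos hcon
  linarith [idfin, hfin]

/-- coordinate sublemma (ii): e in triangle a c d beyond circle(a,|ac|) is strictly
inside circle(d,|dc|). -/
lemma lem_ii_coord (a0 a1 c0 c1 d0 d1 e0 e1 : ℝ)
    (hΔ : 0 < (c0-a0)*(d1-a1) - (c1-a1)*(d0-a0))
    (hΓ : 0 < (e0-a0)*(d1-a1) - (e1-a1)*(d0-a0))
    (hα : 0 < (d0-c0)*(e1-c1) - (d1-c1)*(e0-c0))
    (hΛ : 0 ≤ (c0-a0)*(e1-a1) - (c1-a1)*(e0-a0))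
    (hae : (a0-c0)^2+(a1-c1)^2 ≤ (a0-e0)^2+(a1-e1)^2) :
    (e0-d0)^2+(e1-d1)^2 < (c0-d0)^2+(c1-d1)^2 := by
  obtain ⟨Δ, hΔd⟩ : ∃ x, x = (c0-a0)*(d1-a1) - (c1-a1)*(d0-a0) := ⟨_, rfl⟩
  obtain ⟨Γ, hΓd⟩ : ∃ x, x = (e0-a0)*(d1-a1) - (e1-a1)*(d0-a0) := ⟨_, rfl⟩
  obtain ⟨Λ, hΛd⟩ : ∃ x, x = (c0-a0)*(e1-a1) - (c1-a1)*(e0-a0) := ⟨_, rfl⟩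
  obtain ⟨C, hCd⟩ : ∃ x, x = (c0-a0)^2+(c1-a1)^2 := ⟨_, rfl⟩
  obtain ⟨E, hEd⟩ : ∃ x, x = (d0-a0)^2+(d1-a1)^2 := ⟨_, rfl⟩
  obtain ⟨t, htd⟩ : ∃ x, x = (c0-a0)*(d0-a0)+(c1-a1)*(d1-a1) := ⟨_, rfl⟩
  have hΔp : 0 < Δ := by rw [hΔd]; exact hΔ
  have hΓp : 0 < Γ := by rw [hΓd]; exact hΓ
  have hΛp : 0 ≤ Λ := by rw [hΛd]; exact hΛ
  have iddet : C*E - t^2 = Δ^2 := by rw [hCd, hEd, htd, hΔd]; ring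
  have hdet : t^2 < C*E := by nlinarith [pow_pos hΔp 2]
  have hE0 : 0 ≤ E := by rw [hEd]; positivity
  have hC0 : 0 ≤ C := by rw [hCd]; positivity
  have hCp : 0 < C := by
    rcases eq_or_lt_of_le hC0 with h | h
    · exfalso; nlinarith [sq_nonneg t, pow_pos hΔp 2]
    · exact h
  have hEp : 0 < E := by
    rcases eq_or_lt_of_le hE0 with h | h
    · exfalso; nlinarith [sq_nonneg t, pow_pos hΔp 2]
    · exact h
  have hsum : Γ + Λ < Δ := by
    have idα : Δ - Γ - Λ = (d0-c0)*(e1-c1) - (d1-c1)*(e0-c0) := by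
      rw [hΔd, hΓd, hΛd]; ring
    linarith [hα, idα]
  have idz : Δ^2*((e0-a0)^2+(e1-a1)^2) = Γ^2*C + 2*Γ*Λ*t + Λ^2*E := by
    rw [hΓd, hΛd, hCd, hEd, htd, hΔd]; ring
  have hΨ : C*Δ^2 ≤ Γ^2*C + 2*Γ*Λ*t + Λ^2*E := by
    rw [← idz]
    have h1 : C ≤ (a0-e0)^2+(a1-e1)^2 := by rw [hCd]; linarith [hae]
    have h2 : (a0-e0)^2+(a1-e1)^2 = (e0-a0)^2+(e1-a1)^2 := by ring
    nlinarith [mul_le_mul_of_nonneg_left (h2 ▸ h1) (sq_nonneg Δ)]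
  have hmain := sl_homog C E t Γ Λ Δ hCp hEp hdet hΓp hΛp hsum hΨ
  have idgoal : Δ^2*(((c0-d0)^2+(c1-d1)^2) - ((e0-d0)^2+(e1-d1)^2))
      = Δ^2*(C - 2*t + E) - (Γ^2*C + 2*Γ*(Λ-Δ)*t + (Λ-Δ)^2*E) := by
    rw [hΓd, hΛd, hCd, hEd, htd, hΔd]; ring
  by_contra hcon
  push_neg at hcon
  have h3 : Δ^2*(((c0-d0)^2+(c1-d1)^2) - ((e0-d0)^2+(e1-d1)^2)) ≤ 0 := by
    have := sub_nonpos.2 hcon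
    exact mul_nonpos_iff.2 (Or.inl ⟨by positivity, this⟩)
  linarith [idgoal ▸ h3, hmain]

/-- sublemma (i), weak form: with e on the far side of the diagonal and beyond
circle(a,|ac|), the opposite vertex b satisfies |bc| ≤ |be|. -/
lemma lem_i (a b c d e : E2)
    (hwb : wedge (c-a) (b-a) < 0)
    (hwe : 0 ≤ wedge (c-a) (e-a))
    (hΔ : 0 < wedge (c-a) (d-a))
    (hψb : 0 < wedge (d-c) (b-c))
    (hψe : 0 < wedge (d-c) (e-c))
    (hχb : 0 < wedge (a-d) (b-d))
    (hχe : 0 < wedge (a-d) (e-d))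
    (hae : dist a c ≤ dist a e) :
    dist b c ≤ dist b e := by
  obtain ⟨wb, hwbd⟩ : ∃ x, x = wedge (c-a) (b-a) := ⟨_, rfl⟩
  obtain ⟨we, hwed⟩ : ∃ x, x = wedge (c-a) (e-a) := ⟨_, rfl⟩
  have hwbn : wb < 0 := hwbd ▸ hwb
  have hwen : 0 ≤ we := hwed ▸ hwe
  have hden : wb - we < 0 := by linarith
  obtain ⟨σ, hσd⟩ : ∃ x, x = wb / (wb - we) := ⟨_, rfl⟩
  have hσ0 : 0 < σ := by rw [hσd]; exact div_pos_of_neg_of_neg hwbn hden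
  have hne : wb - we ≠ 0 := ne_of_lt hden
  have hσ1 : σ ≤ 1 := by
    have hq : σ - 1 = we/(wb-we) := by rw [hσd]; field_simp; ring
    have : we/(wb-we) ≤ 0 := div_nonpos_iff.2 (Or.inl ⟨hwen, hden.le⟩)
    linarith
  obtain ⟨p, hpd⟩ : ∃ x : E2, x = b + σ • (e - b) := ⟨_, rfl⟩
  have hp0 : p 0 = b 0 + σ*(e 0 - b 0) := by rw [hpd]; rfl
  have hp1 : p 1 = b 1 + σ*(e 1 - b 1) := by rw [hpd]; rfl
  -- p lies on line ac
  have hplane : (c 0 - a 0)*(p 1 - a 1) - (c 1 - a 1)*(p 0 - a 0) = 0 := by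
    have hexp : (c 0 - a 0)*(p 1 - a 1) - (c 1 - a 1)*(p 0 - a 0)
        = wb + σ*(we - wb) := by
      rw [hp0, hp1, hwbd, hwed]; simp only [wedge]
      have s0 : (c-a) 0 = c 0 - a 0 := rfl
      have s1 : (c-a) 1 = c 1 - a 1 := rfl
      have s2 : (b-a) 0 = b 0 - a 0 := rfl
      have s3 : (b-a) 1 = b 1 - a 1 := rfl
      have s4 : (e-a) 0 = e 0 - a 0 := rfl
      have s5 : (e-a) 1 = e 1 - a 1 := rfl
      rw [s0, s1, s2, s3, s4, s5]; ring
    rw [hexp, hσd]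
    field_simp
    ring
  -- denominator |ac|^2
  obtain ⟨Cd, hCdd⟩ : ∃ x, x = (c 0 - a 0)^2 + (c 1 - a 1)^2 := ⟨_, rfl⟩
  have hCd0 : 0 ≤ Cd := by rw [hCdd]; positivity
  have hCdp : 0 < Cd := by
    rcases eq_or_lt_of_le hCd0 with h | h
    · exfalso
      have h0 : (c 0 - a 0)^2 + (c 1 - a 1)^2 = 0 := by rw [hCdd] at h; linarith
      have hc0 : c 0 - a 0 = 0 := by nlinarith [sq_nonneg (c 0 - a 0), sq_nonneg (c 1 - a 1)]
      have hc1 : c 1 - a 1 = 0 := by nlinarith [sq_nonneg (c 0 - a 0), sq_nonneg (c 1 - a 1)]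
      have : wb = 0 := by
        rw [hwbd]; simp only [wedge]
        have s0 : (c-a) 0 = c 0 - a 0 := rfl
        have s1 : (c-a) 1 = c 1 - a 1 := rfl
        rw [s0, s1, hc0, hc1]; ring
      linarith
    · exact h
  obtain ⟨τ, hτd⟩ : ∃ x, x = ((p 0 - a 0)*(c 0 - a 0) + (p 1 - a 1)*(c 1 - a 1)) / Cd := ⟨_, rfl⟩
  have hτ0 : p 0 - a 0 = τ*(c 0 - a 0) := by
    have key : Cd * (p 0 - a 0)
        = ((p 0 - a 0)*(c 0 - a 0) + (p 1 - a 1)*(c 1 - a 1))*(c 0 - a 0)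
          - (c 1 - a 1)*((c 0 - a 0)*(p 1 - a 1) - (c 1 - a 1)*(p 0 - a 0)) := by
      rw [hCdd]; ring
    rw [hplane] at key
    rw [hτd]
    field_simp
    linarith [key]
  have hτ1 : p 1 - a 1 = τ*(c 1 - a 1) := by
    have key : Cd * (p 1 - a 1)
        = ((p 0 - a 0)*(c 0 - a 0) + (p 1 - a 1)*(c 1 - a 1))*(c 1 - a 1)
          + (c 0 - a 0)*((c 0 - a 0)*(p 1 - a 1) - (c 1 - a 1)*(p 0 - a 0)) := by
      rw [hCdd]; ring
    rw [hplane] at key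
    rw [hτd]
    field_simp
    linarith [key]
  -- τ ∈ (0,1) via the two functionals
  have hΔv : 0 < (c 0 - a 0)*(d 1 - a 1) - (c 1 - a 1)*(d 0 - a 0) := by
    have : wedge (c-a) (d-a) = (c 0 - a 0)*(d 1 - a 1) - (c 1 - a 1)*(d 0 - a 0) := rfl
    rw [← this]; exact hΔ
  have hχp : 0 < (a 0 - d 0)*(p 1 - d 1) - (a 1 - d 1)*(p 0 - d 0) := by
    have hexp2 : (a 0 - d 0)*(p 1 - d 1) - (a 1 - d 1)*(p 0 - d 0)
        = (1-σ)*wedge (a-d) (b-d) + σ*wedge (a-d) (e-d) := by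
      rw [hp0, hp1]; simp only [wedge]
      show _ = (1-σ)*((a 0 - d 0)*(b 1 - d 1) - (a 1 - d 1)*(b 0 - d 0))
          + σ*((a 0 - d 0)*(e 1 - d 1) - (a 1 - d 1)*(e 0 - d 0))
      ring
    rw [hexp2]
    have h1 : 0 ≤ (1-σ)*wedge (a-d) (b-d) := mul_nonneg (by linarith) hχb.le
    have h2 : 0 < σ*wedge (a-d) (e-d) := mul_pos hσ0 hχe
    linarith
  have hτpos : 0 < τ := by
    have idchi : (a 0 - d 0)*(p 1 - d 1) - (a 1 - d 1)*(p 0 - d 0)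
        = τ*((c 0 - a 0)*(d 1 - a 1) - (c 1 - a 1)*(d 0 - a 0)) := by
      have e0 : p 0 - d 0 = τ*(c 0 - a 0) + (a 0 - d 0) := by linarith [hτ0]
      have e1 : p 1 - d 1 = τ*(c 1 - a 1) + (a 1 - d 1) := by linarith [hτ1]
      rw [e0, e1]; ring
    rw [idchi] at hχp
    by_contra hcon
    push_neg at hcon
    nlinarith [hχp, hΔv]
  have hψp : 0 < (d 0 - c 0)*(p 1 - c 1) - (d 1 - c 1)*(p 0 - c 0) := by
    have hexp3 : (d 0 - c 0)*(p 1 - c 1) - (d 1 - c 1)*(p 0 - c 0)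
        = (1-σ)*wedge (d-c) (b-c) + σ*wedge (d-c) (e-c) := by
      rw [hp0, hp1]; simp only [wedge]
      show _ = (1-σ)*((d 0 - c 0)*(b 1 - c 1) - (d 1 - c 1)*(b 0 - c 0))
          + σ*((d 0 - c 0)*(e 1 - c 1) - (d 1 - c 1)*(e 0 - c 0))
      ring
    rw [hexp3]
    have h1 : 0 ≤ (1-σ)*wedge (d-c) (b-c) := mul_nonneg (by linarith) hψb.le
    have h2 : 0 < σ*wedge (d-c) (e-c) := mul_pos hσ0 hψe
    linarith
  have hτlt1 : τ < 1 := by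
    have idpsi : (d 0 - c 0)*(p 1 - c 1) - (d 1 - c 1)*(p 0 - c 0)
        = (1-τ)*((c 0 - a 0)*(d 1 - a 1) - (c 1 - a 1)*(d 0 - a 0)) := by
      have e0 : p 0 - c 0 = τ*(c 0 - a 0) + (a 0 - c 0) := by linarith [hτ0]
      have e1 : p 1 - c 1 = τ*(c 1 - a 1) + (a 1 - c 1) := by linarith [hτ1]
      rw [e0, e1]; ring
    rw [idpsi] at hψp
    by_contra hcon
    push_neg at hcon
    nlinarith [hψp, hΔv]
  -- distance computations
  have dbp : dist b p = σ * dist b e := by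
    have hd : d2 b p = σ^2 * d2 b e := by simp only [d2]; rw [hp0, hp1]; ring
    rw [dist_eq_sqrt_d2, dist_eq_sqrt_d2, hd, Real.sqrt_mul (sq_nonneg σ), Real.sqrt_sq hσ0.le]
  have dpe : dist p e = (1-σ) * dist b e := by
    have hd : d2 p e = (1-σ)^2 * d2 b e := by simp only [d2]; rw [hp0, hp1]; ring
    rw [dist_eq_sqrt_d2, dist_eq_sqrt_d2, hd, Real.sqrt_mul (sq_nonneg (1-σ)), Real.sqrt_sq (by linarith)]
  have dap : dist a p = τ * dist a c := by
    have hd : d2 a p = τ^2 * d2 a c := by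
      simp only [d2]
      have e0 : a 0 - p 0 = -(τ*(c 0 - a 0)) := by linarith [hτ0]
      have e1 : a 1 - p 1 = -(τ*(c 1 - a 1)) := by linarith [hτ1]
      rw [e0, e1]; ring
    rw [dist_eq_sqrt_d2, dist_eq_sqrt_d2, hd, Real.sqrt_mul (sq_nonneg τ), Real.sqrt_sq hτpos.le]
  have dpc : dist p c = (1-τ) * dist a c := by
    have hd : d2 p c = (1-τ)^2 * d2 a c := by
      simp only [d2]
      have e0 : p 0 - c 0 = -((1-τ)*(c 0 - a 0)) := by linarith [hτ0]
      have e1 : p 1 - c 1 = -((1-τ)*(c 1 - a 1)) := by linarith [hτ1]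
      rw [e0, e1]; ring
    rw [dist_eq_sqrt_d2, dist_eq_sqrt_d2, hd, Real.sqrt_mul (sq_nonneg (1-τ)), Real.sqrt_sq (by linarith)]
  have t1 := dist_triangle a p e
  have t2 := dist_triangle b p c
  have hac0 : 0 ≤ dist a c := dist_nonneg
  have hpe : dist p c ≤ dist p e := by
    rw [dpc]
    nlinarith [t1, hae, dap]
  have hbe0 : 0 ≤ dist b e := dist_nonneg
  calc dist b c ≤ dist b p + dist p c := t2
    _ ≤ σ * dist b e + (1-σ) * dist b e := by
        rw [dbp]
        have : dist p c ≤ (1-σ) * dist b e := by rw [← dpe]; exact hpe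
        linarith
    _ = dist b e := by ring

/-- affine functions nonpositive on a set are nonpositive on its convex hull -/
lemma hull_affine_nonpos (k0 k1 k2 : ℝ) (s : Set E2)
    (h : ∀ x ∈ s, k0 + k1 * x 0 + k2 * x 1 ≤ 0) :
    ∀ z ∈ convexHull ℝ s, k0 + k1 * z 0 + k2 * z 1 ≤ 0 := by
  have hconv : Convex ℝ {z : E2 | k0 + k1 * z 0 + k2 * z 1 ≤ 0} := by
    intro x hx y hy α β hα hβ hαβ
    simp only [Set.mem_setOf_eq] at hx hy ⊢
    have c0 : (α • x + β • y) 0 = α * x 0 + β * y 0 := rfl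
    have c1 : (α • x + β • y) 1 = α * x 1 + β * y 1 := rfl
    rw [c0, c1]
    have hβ1 : β = 1 - α := by linarith
    subst hβ1
    have h1 : α * (k0 + k1 * x 0 + k2 * x 1) ≤ 0 := mul_nonpos_iff.2 (Or.inl ⟨hα, hx⟩)
    have h2 : (1-α) * (k0 + k1 * y 0 + k2 * y 1) ≤ 0 := mul_nonpos_iff.2 (Or.inl ⟨hβ, hy⟩)
    nlinarith [h1, h2]
  exact fun z hz => convexHull_min h hconv hz

/-- affine functions nonneg on a set, positive somewhere on it, are positive on
the interior of the convex hull. -/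
lemma interior_affine_pos (k0 k1 k2 : ℝ) (s : Set E2)
    (h : ∀ x ∈ s, 0 ≤ k0 + k1 * x 0 + k2 * x 1)
    (P : E2) (hP : P ∈ s) (hPpos : 0 < k0 + k1 * P 0 + k2 * P 1)
    (z : E2) (hz : z ∈ interior (convexHull ℝ s)) :
    0 < k0 + k1 * z 0 + k2 * z 1 := by
  have hhull : ∀ y ∈ convexHull ℝ s, 0 ≤ k0 + k1 * y 0 + k2 * y 1 := by
    intro y hy
    have := hull_affine_nonpos (-k0) (-k1) (-k2) s (fun x hx => by linarith [h x hx]) y hy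
    linarith
  by_contra hcon
  push_neg at hcon
  obtain ⟨ε, hε, hball⟩ := Metric.mem_nhds_iff.1 (mem_interior_iff_mem_nhds.1 hz)
  obtain ⟨t, htd⟩ : ∃ x, x = ε / (2*(dist z P + 1)) := ⟨_, rfl⟩
  have hdzP : 0 ≤ dist z P := dist_nonneg
  have ht : 0 < t := by rw [htd]; positivity
  obtain ⟨y, hyd⟩ : ∃ x : E2, x = z + t • (z - P) := ⟨_, rfl⟩
  have hy0 : y 0 = z 0 + t*(z 0 - P 0) := by rw [hyd]; rfl
  have hy1 : y 1 = z 1 + t*(z 1 - P 1) := by rw [hyd]; rfl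
  have hdyz : dist y z = t * dist z P := by
    have hd : d2 y z = t^2 * d2 z P := by simp only [d2]; rw [hy0, hy1]; ring
    rw [dist_eq_sqrt_d2, dist_eq_sqrt_d2, hd, Real.sqrt_mul (sq_nonneg t), Real.sqrt_sq ht.le]
  have hmem : y ∈ convexHull ℝ s := by
    apply hball
    rw [Metric.mem_ball, hdyz, htd]
    rw [div_mul_eq_mul_div, div_lt_iff₀ (by positivity)]
    nlinarith [hε, hdzP]
  have hfy := hhull y hmem
  have hfy2 : k0 + k1 * y 0 + k2 * y 1
      = (1+t)*(k0 + k1 * z 0 + k2 * z 1) - t*(k0 + k1 * P 0 + k2 * P 1) := by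
    rw [hy0, hy1]; ring
  nlinarith [mul_pos ht hPpos, mul_nonneg ht.le (neg_nonneg.2 hcon)]

/-- dichotomy for the interior point: it cannot be strictly farther from c than
from both b and d. -/
lemma lem_hull (a b c d e : E2)
    (he : e ∈ convexHull ℝ ({a, b, c, d} : Set E2))
    (hB : 0 < d2 b c) (hD : 0 < d2 c d)
    (hkey : d2 b c + d2 c d ≤ d2 b d)
    (h1a : d2 a c ≤ d2 a b) (h3a : d2 a c ≤ d2 a d) :
    d2 e c ≤ d2 e b ∨ d2 e c ≤ d2 e d := by
  by_contra hcon
  push_neg at hcon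
  obtain ⟨h1e, h3e⟩ := hcon
  -- affine functions f1 z = d2 z c - d2 z b, f3 z = d2 z c - d2 z d
  -- F = Dd * f1 + (X - Dd) * f3 with Dd = d2 c d, X = d2 b d
  obtain ⟨Dd, hDd⟩ : ∃ x, x = d2 c d := ⟨_, rfl⟩
  obtain ⟨X, hX⟩ : ∃ x, x = d2 b d := ⟨_, rfl⟩
  obtain ⟨B, hBd⟩ : ∃ x, x = d2 b c := ⟨_, rfl⟩
  -- coefficients of F as affine function k0 + k1 z0 + k2 z1
  obtain ⟨k1, hk1⟩ : ∃ x, x = Dd*(2*(b 0 - c 0)) + (X-Dd)*(2*(d 0 - c 0)) := ⟨_, rfl⟩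
  obtain ⟨k2, hk2⟩ : ∃ x, x = Dd*(2*(b 1 - c 1)) + (X-Dd)*(2*(d 1 - c 1)) := ⟨_, rfl⟩
  obtain ⟨k0, hk0⟩ : ∃ x, x = Dd*((c 0)^2+(c 1)^2-(b 0)^2-(b 1)^2)
      + (X-Dd)*((c 0)^2+(c 1)^2-(d 0)^2-(d 1)^2) := ⟨_, rfl⟩
  have hFid : ∀ z : E2, k0 + k1 * z 0 + k2 * z 1
      = Dd*(d2 z c - d2 z b) + (X-Dd)*(d2 z c - d2 z d) := by
    intro z; rw [hk0, hk1, hk2]; simp only [d2]; ring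
  have hXB : B ≤ X - Dd := by rw [hBd, hX, hDd]; linarith [hkey]
  have hDdpos : 0 < Dd := hDd ▸ hD
  have hBpos : 0 < B := hBd ▸ hB
  have hvert : ∀ x ∈ ({a, b, c, d} : Set E2), k0 + k1 * x 0 + k2 * x 1 ≤ 0 := by
    intro x hx
    simp only [Set.mem_insert_iff, Set.mem_singleton_iff] at hx
    rcases hx with h | h | h | h
    · rw [h, hFid]
      have f1a : d2 a c - d2 a b ≤ 0 := by linarith
      have f3a : d2 a c - d2 a d ≤ 0 := by linarith
      nlinarith [mul_nonpos_iff.2 (Or.inl ⟨hDdpos.le, f1a⟩),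
        mul_nonpos_iff.2 (Or.inl ⟨(by linarith : (0:ℝ) ≤ X - Dd), f3a⟩)]
    · rw [h, hFid]
      have e1 : d2 b b = 0 := by simp [d2]
      have e2 : d2 b c = B := hBd.symm
      have e3 : d2 b d = X := hX.symm
      rw [e1, e2, e3]
      nlinarith [mul_le_mul hXB (by linarith : Dd ≤ X - B) hDdpos.le (by linarith : (0:ℝ) ≤ X - Dd)]
    · rw [h, hFid]
      have e1 : d2 c c = 0 := by simp [d2]
      have e2 : d2 c b = B := by rw [hBd]; simp only [d2]; ring
      have e3 : d2 c d = Dd := hDd.symm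
      rw [e1, e2, e3]
      nlinarith [mul_pos hDdpos hBpos, mul_nonneg (by linarith : (0:ℝ) ≤ X - Dd) hDdpos.le]
    · rw [h, hFid]
      have e1 : d2 d d = 0 := by simp [d2]
      have e2 : d2 d c = Dd := by rw [hDd]; simp only [d2]; ring
      have e3 : d2 d b = X := by rw [hX]; simp only [d2]; ring
      rw [e1, e2, e3]
      nlinarith []
  have hFe := hull_affine_nonpos k0 k1 k2 _ hvert e he
  rw [hFid] at hFe
  nlinarith [mul_pos hDdpos (by linarith : (0:ℝ) < d2 e c - d2 e b),
    mul_pos (by linarith : (0:ℝ) < X - Dd) (by linarith : (0:ℝ) < d2 e c - d2 e d)]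

lemma dziobek3 (q : Fin 5 → E2) (m : Fin 5 → ℝ) (lam : ℝ)
    (hcc : ∀ i, -(lam • q i) = ∑ j ∈ Finset.univ.erase i, (m j / dist (q i) (q j) ^ 3) • (q j - q i))
    (i j k1 k2 k3 : Fin 5)
    (hei : (Finset.univ.erase i) = {j, k1, k2, k3})
    (hej : (Finset.univ.erase j) = {i, k1, k2, k3})
    (h1 : j ∉ ({k1, k2, k3} : Finset (Fin 5))) (h2 : i ∉ ({k1, k2, k3} : Finset (Fin 5)))
    (h3 : k1 ∉ ({k2, k3} : Finset (Fin 5))) (h4 : k2 ∉ ({k3} : Finset (Fin 5))) :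
      m k1 * (1/dist (q i) (q k1)^3 - 1/dist (q j) (q k1)^3) * wedge (q j - q i) (q k1 - q i)
    + m k2 * (1/dist (q i) (q k2)^3 - 1/dist (q j) (q k2)^3) * wedge (q j - q i) (q k2 - q i)
    + m k3 * (1/dist (q i) (q k3)^3 - 1/dist (q j) (q k3)^3) * wedge (q j - q i) (q k3 - q i) = 0 := by
  have expand : ∀ (a : Fin 5) (co : Fin 2), (ha : Finset.univ.erase a = {j, k1, k2, k3}) → True := fun _ _ _ => trivial
  have Hi : ∀ co : Fin 2, -(lam * q i co)
      = m j / dist (q i) (q j) ^ 3 * (q j co - q i co)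
      + (m k1 / dist (q i) (q k1) ^ 3 * (q k1 co - q i co)
      + (m k2 / dist (q i) (q k2) ^ 3 * (q k2 co - q i co)
      + m k3 / dist (q i) (q k3) ^ 3 * (q k3 co - q i co))) := by
    intro co
    have h := congrArg (fun v : E2 => v co) (hcc i)
    simp only at h
    rw [neg_coord, smul_coord] at h
    rw [sum_coord] at h
    rw [hei, Finset.sum_insert h1, Finset.sum_insert h3, Finset.sum_insert h4,
      Finset.sum_singleton] at h
    simpa only [smul_coord, sub_coord] using h
  have Hj : ∀ co : Fin 2, -(lam * q j co)
      = m i / dist (q j) (q i) ^ 3 * (q i co - q j co)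
      + (m k1 / dist (q j) (q k1) ^ 3 * (q k1 co - q j co)
      + (m k2 / dist (q j) (q k2) ^ 3 * (q k2 co - q j co)
      + m k3 / dist (q j) (q k3) ^ 3 * (q k3 co - q j co))) := by
    intro co
    have h := congrArg (fun v : E2 => v co) (hcc j)
    simp only at h
    rw [neg_coord, smul_coord] at h
    rw [sum_coord] at h
    rw [hej, Finset.sum_insert h2, Finset.sum_insert h3, Finset.sum_insert h4,
      Finset.sum_singleton] at h
    simpa only [smul_coord, sub_coord] using h
  have Hi0 := Hi 0; have Hi1 := Hi 1; have Hj0 := Hj 0; have Hj1 := Hj 1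
  simp only [wedge, sub_coord]
  linear_combination (q j 1 - q i 1) * Hi0 - (q j 0 - q i 0) * Hi1
    + (q j 0 - q i 0) * Hj1 - (q j 1 - q i 1) * Hj0


lemma interior_wedge (x y u v z : E2)
    (h1 : 0 < wedge (y-x) (u-x)) (h2 : 0 < wedge (y-x) (v-x))
    (hz : z ∈ interior (convexHull ℝ ({x, y, u, v} : Set E2))) :
    0 < wedge (y-x) (z-x) := by
  obtain ⟨k0, hk0⟩ : ∃ t, t = (y 1 - x 1)*(x 0) - (y 0 - x 0)*(x 1) := ⟨_, rfl⟩
  obtain ⟨k1, hk1⟩ : ∃ t, t = -(y 1 - x 1) := ⟨_, rfl⟩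
  obtain ⟨k2, hk2⟩ : ∃ t, t = y 0 - x 0 := ⟨_, rfl⟩
  have hf : ∀ w : E2, k0 + k1 * w 0 + k2 * w 1 = wedge (y-x) (w-x) := by
    intro w
    simp only [wedge, sub_coord]
    rw [hk0, hk1, hk2]; ring
  have hvert : ∀ w ∈ ({x, y, u, v} : Set E2), 0 ≤ k0 + k1 * w 0 + k2 * w 1 := by
    intro w hw
    simp only [Set.mem_insert_iff, Set.mem_singleton_iff] at hw
    rcases hw with h | h | h | h <;> rw [h, hf]
    · have : wedge (y-x) (x-x) = 0 := by simp only [wedge, sub_coord]; ring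
      rw [this]
    · have : wedge (y-x) (y-x) = 0 := by simp only [wedge, sub_coord]; ring
      rw [this]
    · exact h1.le
    · exact h2.le
  have := interior_affine_pos k0 k1 k2 _ hvert u (by simp) (by rw [hf]; exact h1) z hz
  rw [hf] at this
  exact this

/-- reflection of the plane -/
noncomputable def ref (v : E2) : E2 := (WithLp.equiv 2 (Fin 2 → ℝ)).symm ![v 0, - v 1]

lemma ref0 (v : E2) : ref v 0 = v 0 := rfl
lemma ref1 (v : E2) : ref v 1 = - v 1 := rfl

lemma wedge_ref (x y z w : E2) :
    wedge (ref x - ref y) (ref z - ref w) = - wedge (x - y) (z - w) := by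
  simp only [wedge, sub_coord, ref0, ref1]; ring

lemma dist_ref (x y : E2) : dist (ref x) (ref y) = dist x y := by
  rw [dist_eq_sqrt_d2, dist_eq_sqrt_d2]
  congr 1
  simp only [d2, ref0, ref1]; ring

/-- Claim I one-sided kill: interior point weakly on the d-side of diagonal ac,
at distance ≥ |ac| from a, contradicts the Dziobek equation of the pair (c,e). -/
lemma claimI_side (a b c d e : E2) (mA mB mD : ℝ)
    (hmA : 0 < mA) (hmB : 0 < mB) (hmD : 0 < mD)
    (E1 : mA * (1/dist c a^3 - 1/dist e a^3) * wedge (e-c) (a-c)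
        + mB * (1/dist c b^3 - 1/dist e b^3) * wedge (e-c) (b-c)
        + mD * (1/dist c d^3 - 1/dist e d^3) * wedge (e-c) (d-c) = 0)
    (hΔ : 0 < wedge (c-a) (d-a))
    (hwb : wedge (c-a) (b-a) < 0)
    (hψb : 0 < wedge (d-c) (b-c))
    (hχb : 0 < wedge (a-d) (b-d))
    (hibc : 0 < wedge (c-b) (e-b))
    (hicd : 0 < wedge (d-c) (e-c))
    (hida : 0 < wedge (a-d) (e-d))
    (hdca : 0 < dist c a) (hdea : 0 < dist e a) (hdcb : 0 < dist c b)
    (hdeb : 0 < dist e b) (hdcd : 0 < dist c d) (hded : 0 < dist e d)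
    (hwe : 0 ≤ wedge (c-a) (e-a))
    (bad : dist a c ≤ dist a e) : False := by
  -- sublemma (ii) : dist e d < dist c d
  have hΓ : 0 < wedge (e-a) (d-a) := by
    have hid : wedge (e-a) (d-a) = wedge (a-d) (e-d) := by
      simp only [wedge, sub_coord]; ring
    rw [hid]; exact hida
  have hii : dist e d < dist c d := by
    rw [dist_lt_dist_iff]
    have h := lem_ii_coord (a 0) (a 1) (c 0) (c 1) (d 0) (d 1) (e 0) (e 1)
      (by simpa only [wedge, sub_coord] using hΔ)
      (by simpa only [wedge, sub_coord] using hΓ)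
      (by simpa only [wedge, sub_coord] using hicd)
      (by simpa only [wedge, sub_coord] using hwe)
      (by simpa only [d2] using dist_le_dist_iff.1 bad)
    simpa only [d2] using h
  -- sublemma (i) : dist b c ≤ dist b e
  have hi : dist b c ≤ dist b e :=
    lem_i a b c d e hwb hwe hΔ hψb hicd hχb hida bad
  -- kill
  have sA : 0 ≤ mA * (1/dist c a^3 - 1/dist e a^3) * wedge (e-c) (a-c) := by
    apply mul_nonneg
    apply mul_nonneg hmA.le
    · have hba : dist c a ≤ dist e a := by
        rw [dist_comm c a, dist_comm e a]; exact bad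
      linarith [inv_cube_le hdca hba]
    · have hid : wedge (e-c) (a-c) = wedge (c-a) (e-a) := by
        simp only [wedge, sub_coord]; ring
      rw [hid]; exact hwe
  have sB : 0 ≤ mB * (1/dist c b^3 - 1/dist e b^3) * wedge (e-c) (b-c) := by
    apply mul_nonneg
    apply mul_nonneg hmB.le
    · have hbc : dist c b ≤ dist e b := by
        rw [dist_comm c b, dist_comm e b]; exact hi
      linarith [inv_cube_le hdcb hbc]
    · have hid : wedge (e-c) (b-c) = wedge (c-b) (e-b) := by
        simp only [wedge, sub_coord]; ring
      rw [hid]; exact hibc.le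
  have sD : 0 < mD * (1/dist c d^3 - 1/dist e d^3) * wedge (e-c) (d-c) := by
    have h1 : 1/dist c d^3 - 1/dist e d^3 < 0 := by
      have := inv_cube_lt hded hii
      linarith
    have h2 : wedge (e-c) (d-c) < 0 := by
      have hid : wedge (e-c) (d-c) = - wedge (d-c) (e-c) := by
        simp only [wedge, sub_coord]; ring
      rw [hid]; linarith
    have := mul_pos_of_neg_of_neg h1 h2
    have h3 : mD * (1/dist c d^3 - 1/dist e d^3) * wedge (e-c) (d-c)
        = mD * ((1/dist c d^3 - 1/dist e d^3) * wedge (e-c) (d-c)) := by ring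
    rw [h3]
    exact mul_pos hmD this
  linarith [E1, sA, sB, sD]

/-- Claim I: the diagonal from a beats the distance from a to the interior point. -/
lemma claimI (a b c d e : E2) (mA mB mD : ℝ)
    (hmA : 0 < mA) (hmB : 0 < mB) (hmD : 0 < mD)
    (E1 : mA * (1/dist c a^3 - 1/dist e a^3) * wedge (e-c) (a-c)
        + mB * (1/dist c b^3 - 1/dist e b^3) * wedge (e-c) (b-c)
        + mD * (1/dist c d^3 - 1/dist e d^3) * wedge (e-c) (d-c) = 0)
    (hq1 : 0 < wedge (b-a) (c-b)) (hq2 : 0 < wedge (c-b) (d-c))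
    (hq3 : 0 < wedge (d-c) (a-d)) (hq4 : 0 < wedge (a-d) (b-a))
    (hiab : 0 < wedge (b-a) (e-a)) (hibc : 0 < wedge (c-b) (e-b))
    (hicd : 0 < wedge (d-c) (e-c)) (hida : 0 < wedge (a-d) (e-d))
    (hdca : 0 < dist c a) (hdea : 0 < dist e a) (hdcb : 0 < dist c b)
    (hdeb : 0 < dist e b) (hdcd : 0 < dist c d) (hded : 0 < dist e d) :
    dist a c > dist a e := by
  by_contra hcon
  push_neg at hcon
  have hΔ : 0 < wedge (c-a) (d-a) := by
    have hid : wedge (c-a) (d-a) = wedge (d-c) (a-d) := by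
      simp only [wedge, sub_coord]; ring
    rw [hid]; exact hq3
  have hwb : wedge (c-a) (b-a) < 0 := by
    have hid : wedge (c-a) (b-a) = - wedge (b-a) (c-b) := by
      simp only [wedge, sub_coord]; ring
    rw [hid]; linarith
  have hψb : 0 < wedge (d-c) (b-c) := by
    have hid : wedge (d-c) (b-c) = wedge (c-b) (d-c) := by
      simp only [wedge, sub_coord]; ring
    rw [hid]; exact hq2
  have hχb : 0 < wedge (a-d) (b-d) := by
    have hid : wedge (a-d) (b-d) = wedge (a-d) (b-a) := by
      simp only [wedge, sub_coord]; ring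
    rw [hid]; exact hq4
  rcases le_or_gt 0 (wedge (c-a) (e-a)) with hwe | hwe
  · exact claimI_side a b c d e mA mB mD hmA hmB hmD E1 hΔ hwb hψb hχb hibc hicd hida
      hdca hdea hdcb hdeb hdcd hded hwe hcon
  · -- mirrored configuration: (a, d, c, b) reflected
    apply claimI_side (ref a) (ref d) (ref c) (ref b) (ref e) mA mD mB hmA hmD hmB
    · -- reflected Dziobek equation
      rw [dist_ref, dist_ref, dist_ref, dist_ref, dist_ref, dist_ref,
        wedge_ref, wedge_ref, wedge_ref]
      linear_combination -E1
    · rw [wedge_ref]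
      have hid : wedge (c-a) (b-a) = - wedge (b-a) (c-b) := by
        simp only [wedge, sub_coord]; ring
      rw [hid]; linarith
    · rw [wedge_ref]; linarith [hΔ]
    · rw [wedge_ref]
      have hid : wedge (b-c) (d-c) = - wedge (c-b) (d-c) := by
        simp only [wedge, sub_coord]; ring
      rw [hid]; linarith
    · rw [wedge_ref]
      have hid : wedge (a-b) (d-b) = - wedge (a-d) (b-a) := by
        simp only [wedge, sub_coord]; ring
      rw [hid]; linarith
    · -- 0 < wedge (c'-b') (e'-b') with b' = ref d : from hicd
      rw [wedge_ref]
      have hid : wedge (c-d) (e-d) = - wedge (d-c) (e-c) := by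
        simp only [wedge, sub_coord]; ring
      rw [hid]; linarith
    · -- 0 < wedge (d'-c') (e'-c') with d' = ref b : from hibc
      rw [wedge_ref]
      have hid : wedge (b-c) (e-c) = - wedge (c-b) (e-b) := by
        simp only [wedge, sub_coord]; ring
      rw [hid]; linarith
    · -- 0 < wedge (a'-d') (e'-d') with d' = ref b : from hiab
      rw [wedge_ref]
      have hid : wedge (a-b) (e-b) = - wedge (b-a) (e-a) := by
        simp only [wedge, sub_coord]; ring
      rw [hid]; linarith
    · rw [dist_ref]; exact hdca
    · rw [dist_ref]; exact hdea
    · rw [dist_ref]; exact hdcd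
    · rw [dist_ref]; exact hded
    · rw [dist_ref]; exact hdcb
    · rw [dist_ref]; exact hdeb
    · rw [wedge_ref]; linarith
    · rw [dist_ref, dist_ref]; exact hcon

/-- Claim II: the diagonal from a beats one of the two sides at a. -/
lemma claimII (a b c d e : E2) (mA mB mD mE : ℝ)
    (hmA : 0 < mA) (hmB : 0 < mB) (hmD : 0 < mD) (hmE : 0 < mE)
    (E2eq : mA * (1/dist b a^3 - 1/dist c a^3) * wedge (c-b) (a-b)
        + mD * (1/dist b d^3 - 1/dist c d^3) * wedge (c-b) (d-b)
        + mE * (1/dist b e^3 - 1/dist c e^3) * wedge (c-b) (e-b) = 0)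
    (E3eq : mA * (1/dist c a^3 - 1/dist d a^3) * wedge (d-c) (a-c)
        + mB * (1/dist c b^3 - 1/dist d b^3) * wedge (d-c) (b-c)
        + mE * (1/dist c e^3 - 1/dist d e^3) * wedge (d-c) (e-c) = 0)
    (hq1 : 0 < wedge (b-a) (c-b)) (hq2 : 0 < wedge (c-b) (d-c))
    (hq3 : 0 < wedge (d-c) (a-d)) (hq4 : 0 < wedge (a-d) (b-a))
    (hibc : 0 < wedge (c-b) (e-b)) (hicd : 0 < wedge (d-c) (e-c))
    (he : e ∈ convexHull ℝ ({a, b, c, d} : Set E2))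
    (hdba : 0 < dist b a) (hdca : 0 < dist c a) (hdda : 0 < dist d a)
    (hdbd : 0 < dist b d) (hdcd : 0 < dist c d) (hdcb : 0 < dist c b)
    (hddb : 0 < dist d b) (hdbe : 0 < dist b e) (hdce : 0 < dist c e)
    (hdde : 0 < dist d e) (hdbc : 0 < dist b c) :
    dist a c > dist a b ∨ dist a c > dist a d := by
  by_contra hcon
  push_neg at hcon
  obtain ⟨bad1, bad2⟩ := hcon
  -- key geometric fact : angle at c ≥ 90°, so d2 b c + d2 c d ≤ d2 b d
  have hkeyc := lem_key_coord (a 0) (a 1) (b 0) (b 1) (c 0) (c 1) (d 0) (d 1)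
    (by simpa only [wedge, sub_coord] using hq1)
    (by simpa only [wedge, sub_coord] using hq2)
    (by simpa only [wedge, sub_coord] using hq3)
    (by simpa only [wedge, sub_coord] using hq4)
    (by
      have h1 : d2 a c ≤ d2 a b := dist_le_dist_iff.1 bad1
      simp only [d2] at h1
      nlinarith [h1])
    (by
      have h1 : d2 a c ≤ d2 a d := dist_le_dist_iff.1 bad2
      simp only [d2] at h1
      nlinarith [h1])
  have hkey : d2 b c + d2 c d ≤ d2 b d := by
    simp only [d2]; nlinarith [hkeyc]
  have hB : 0 < d2 b c := by
    have := dist_lt_dist_iff.1 (show dist b b < dist b c by simpa using hdbc)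
    simpa [d2] using this
  have hD : 0 < d2 c d := by
    have := dist_lt_dist_iff.1 (show dist c c < dist c d by simpa using hdcd)
    simpa [d2] using this
  -- strict diagonal comparisons
  have ha2 : dist c d < dist b d := by
    rw [dist_lt_dist_iff]
    have hid : d2 b d = d2 b c + d2 c d
        - 2*((b 0 - c 0)*(d 0 - c 0) + (b 1 - c 1)*(d 1 - c 1)) := by
      simp only [d2]; ring
    have hcd : d2 c d = d2 c d := rfl
    nlinarith [hkeyc, hB, hid]
  have hb2 : dist b c < dist b d := by
    rw [dist_lt_dist_iff]
    have hid : d2 b d = d2 b c + d2 c d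
        - 2*((b 0 - c 0)*(d 0 - c 0) + (b 1 - c 1)*(d 1 - c 1)) := by
      simp only [d2]; ring
    nlinarith [hkeyc, hD, hid]
  -- dichotomy for the interior point
  have hdich := lem_hull a b c d e he hB hD hkey
    (dist_le_dist_iff.1 bad1) (dist_le_dist_iff.1 bad2)
  rcases hdich with hc1 | hc2
  · -- e weakly closer to c than to b : kill with E2eq (pair (b,c))
    have sA : mA * (1/dist b a^3 - 1/dist c a^3) * wedge (c-b) (a-b) ≤ 0 := by
      have hw : 0 < wedge (c-b) (a-b) := by
        have hid : wedge (c-b) (a-b) = wedge (b-a) (c-b) := by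
          simp only [wedge, sub_coord]; ring
        rw [hid]; exact hq1
      have hfac : 1/dist b a^3 - 1/dist c a^3 ≤ 0 := by
        have h1 : dist c a ≤ dist b a := by
          rw [dist_comm c a, dist_comm b a]; exact bad1
        linarith [inv_cube_le hdca h1]
      have h2 := mul_nonneg (mul_nonneg hmA.le (neg_nonneg.2 hfac)) hw.le
      have heq : mA * -(1/dist b a^3 - 1/dist c a^3) * wedge (c-b) (a-b)
          = -(mA * (1/dist b a^3 - 1/dist c a^3) * wedge (c-b) (a-b)) := by ring
      rw [heq] at h2; linarith
    have sD : mD * (1/dist b d^3 - 1/dist c d^3) * wedge (c-b) (d-b) < 0 := by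
      have hw : 0 < wedge (c-b) (d-b) := by
        have hid : wedge (c-b) (d-b) = wedge (c-b) (d-c) := by
          simp only [wedge, sub_coord]; ring
        rw [hid]; exact hq2
      have hfac : 1/dist b d^3 - 1/dist c d^3 < 0 := by
        linarith [inv_cube_lt hdcd ha2]
      have h2 := mul_pos (mul_pos hmD (neg_pos.2 hfac)) hw
      have heq : mD * -(1/dist b d^3 - 1/dist c d^3) * wedge (c-b) (d-b)
          = -(mD * (1/dist b d^3 - 1/dist c d^3) * wedge (c-b) (d-b)) := by ring
      rw [heq] at h2; linarith
    have sE : mE * (1/dist b e^3 - 1/dist c e^3) * wedge (c-b) (e-b) ≤ 0 := by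
      have hfac : 1/dist b e^3 - 1/dist c e^3 ≤ 0 := by
        have h1 : dist c e ≤ dist b e := by
          rw [dist_comm c e, dist_comm b e]
          exact dist_le_dist_iff.2 (by simpa only [d2] using hc1)
        linarith [inv_cube_le hdce h1]
      have h2 := mul_nonneg (mul_nonneg hmE.le (neg_nonneg.2 hfac)) hibc.le
      have heq : mE * -(1/dist b e^3 - 1/dist c e^3) * wedge (c-b) (e-b)
          = -(mE * (1/dist b e^3 - 1/dist c e^3) * wedge (c-b) (e-b)) := by ring
      rw [heq] at h2; linarith
    linarith [E2eq, sA, sD, sE]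
  · -- e weakly closer to c than to d : kill with E3eq (pair (c,d))
    have sA : 0 ≤ mA * (1/dist c a^3 - 1/dist d a^3) * wedge (d-c) (a-c) := by
      have hw : 0 < wedge (d-c) (a-c) := by
        have hid : wedge (d-c) (a-c) = wedge (d-c) (a-d) := by
          simp only [wedge, sub_coord]; ring
        rw [hid]; exact hq3
      apply mul_nonneg (mul_nonneg hmA.le _) hw.le
      have h1 : dist c a ≤ dist d a := by
        rw [dist_comm c a, dist_comm d a]; exact bad2
      linarith [inv_cube_le hdca h1]
    have sB : 0 < mB * (1/dist c b^3 - 1/dist d b^3) * wedge (d-c) (b-c) := by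
      have hw : 0 < wedge (d-c) (b-c) := by
        have hid : wedge (d-c) (b-c) = wedge (c-b) (d-c) := by
          simp only [wedge, sub_coord]; ring
        rw [hid]; exact hq2
      apply mul_pos (mul_pos hmB _) hw
      have h1 : dist c b < dist d b := by
        rw [dist_comm c b, dist_comm d b]; exact hb2
      linarith [inv_cube_lt hdcb h1]
    have sE : 0 ≤ mE * (1/dist c e^3 - 1/dist d e^3) * wedge (d-c) (e-c) := by
      apply mul_nonneg (mul_nonneg hmE.le _) hicd.le
      have h1 : dist c e ≤ dist d e := by
        rw [dist_comm c e, dist_comm d e]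
        exact dist_le_dist_iff.2 (by simpa only [d2] using hc2)
      linarith [inv_cube_le hdce h1]
    linarith [E3eq, sA, sB, sE]


end Stmt16Aux

open Stmt16Aux in
/-- For a 5-body planar central configuration whose convex hull is the strictly
convex quadrilateral `q 0 q 1 q 2 q 3` (counterclockwise) with `q 4` interior:
each diagonal beats the distance to the interior point (`r₁₃ > r₁₅`) and beats at
least one of the adjacent sides (`r₁₃ > r₁₂` or `r₁₃ > r₁₄`), together with the
statements obtained by cyclic permutation of the four vertices. -/
theorem stmt16 (q : Fin 5 → EuclideanSpace ℝ (Fin 2)) (m : Fin 5 → ℝ)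
    (lam : ℝ) (hm : ∀ i, 0 < m i) (hq : ∀ i j, i ≠ j → q i ≠ q j)
    (hcom : ∑ i, m i • q i = 0)
    (hcc : ∀ i, -(lam • q i)
      = ∑ j ∈ Finset.univ.erase i, (m j / dist (q i) (q j) ^ 3) • (q j - q i))
    (hc1 : 0 < wedge (q 1 - q 0) (q 2 - q 1))
    (hc2 : 0 < wedge (q 2 - q 1) (q 3 - q 2))
    (hc3 : 0 < wedge (q 3 - q 2) (q 0 - q 3))
    (hc4 : 0 < wedge (q 0 - q 3) (q 1 - q 0))
    (h5 : q 4 ∈ interior (convexHull ℝ {q 0, q 1, q 2, q 3})) :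
    (dist (q 0) (q 2) > dist (q 0) (q 4) ∧
      (dist (q 0) (q 2) > dist (q 0) (q 1) ∨ dist (q 0) (q 2) > dist (q 0) (q 3))) ∧
    (dist (q 1) (q 3) > dist (q 1) (q 4) ∧
      (dist (q 1) (q 3) > dist (q 1) (q 2) ∨ dist (q 1) (q 3) > dist (q 1) (q 0))) ∧
    (dist (q 2) (q 0) > dist (q 2) (q 4) ∧
      (dist (q 2) (q 0) > dist (q 2) (q 3) ∨ dist (q 2) (q 0) > dist (q 2) (q 1))) ∧
    (dist (q 3) (q 1) > dist (q 3) (q 4) ∧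
      (dist (q 3) (q 1) > dist (q 3) (q 0) ∨ dist (q 3) (q 1) > dist (q 3) (q 2))) := by
  have hd : ∀ i j, i ≠ j → 0 < dist (q i) (q j) := fun i j h => dist_pos.2 (hq i j h)
  -- set permutations of the quadrilateral vertex set
  have hs1 : ({q 1, q 2, q 3, q 0} : Set E2) = {q 0, q 1, q 2, q 3} := by
    ext w; simp only [Set.mem_insert_iff, Set.mem_singleton_iff]; tauto
  have hs2 : ({q 2, q 3, q 0, q 1} : Set E2) = {q 0, q 1, q 2, q 3} := by
    ext w; simp only [Set.mem_insert_iff, Set.mem_singleton_iff]; tauto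
  have hs3 : ({q 3, q 0, q 1, q 2} : Set E2) = {q 0, q 1, q 2, q 3} := by
    ext w; simp only [Set.mem_insert_iff, Set.mem_singleton_iff]; tauto
  -- interior wedges : q 4 is strictly inside each edge line
  have hw01 : 0 < wedge (q 1 - q 0) (q 4 - q 0) := by
    apply interior_wedge (q 0) (q 1) (q 2) (q 3) (q 4) ?h1 ?h2 h5
    case h1 =>
      have hid : wedge (q 1 - q 0) (q 2 - q 0) = wedge (q 1 - q 0) (q 2 - q 1) := by
        simp only [wedge, sub_coord]; ring
      rw [hid]; exact hc1
    case h2 =>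
      have hid : wedge (q 1 - q 0) (q 3 - q 0) = wedge (q 0 - q 3) (q 1 - q 0) := by
        simp only [wedge, sub_coord]; ring
      rw [hid]; exact hc4
  have hw12 : 0 < wedge (q 2 - q 1) (q 4 - q 1) := by
    apply interior_wedge (q 1) (q 2) (q 3) (q 0) (q 4) ?h1 ?h2 (by rw [hs1]; exact h5)
    case h1 =>
      have hid : wedge (q 2 - q 1) (q 3 - q 1) = wedge (q 2 - q 1) (q 3 - q 2) := by
        simp only [wedge, sub_coord]; ring
      rw [hid]; exact hc2
    case h2 =>
      have hid : wedge (q 2 - q 1) (q 0 - q 1) = wedge (q 1 - q 0) (q 2 - q 1) := by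
        simp only [wedge, sub_coord]; ring
      rw [hid]; exact hc1
  have hw23 : 0 < wedge (q 3 - q 2) (q 4 - q 2) := by
    apply interior_wedge (q 2) (q 3) (q 0) (q 1) (q 4) ?h1 ?h2 (by rw [hs2]; exact h5)
    case h1 =>
      have hid : wedge (q 3 - q 2) (q 0 - q 2) = wedge (q 3 - q 2) (q 0 - q 3) := by
        simp only [wedge, sub_coord]; ring
      rw [hid]; exact hc3
    case h2 =>
      have hid : wedge (q 3 - q 2) (q 1 - q 2) = wedge (q 2 - q 1) (q 3 - q 2) := by
        simp only [wedge, sub_coord]; ring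
      rw [hid]; exact hc2
  have hw30 : 0 < wedge (q 0 - q 3) (q 4 - q 3) := by
    apply interior_wedge (q 3) (q 0) (q 1) (q 2) (q 4) ?h1 ?h2 (by rw [hs3]; exact h5)
    case h1 =>
      have hid : wedge (q 0 - q 3) (q 1 - q 3) = wedge (q 0 - q 3) (q 1 - q 0) := by
        simp only [wedge, sub_coord]; ring
      rw [hid]; exact hc4
    case h2 =>
      have hid : wedge (q 0 - q 3) (q 2 - q 3) = wedge (q 3 - q 2) (q 0 - q 3) := by
        simp only [wedge, sub_coord]; ring
      rw [hid]; exact hc3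
  -- hull memberships
  have he0 : q 4 ∈ convexHull ℝ ({q 0, q 1, q 2, q 3} : Set E2) := interior_subset h5
  have he1 : q 4 ∈ convexHull ℝ ({q 1, q 2, q 3, q 0} : Set E2) := by rw [hs1]; exact he0
  have he2 : q 4 ∈ convexHull ℝ ({q 2, q 3, q 0, q 1} : Set E2) := by rw [hs2]; exact he0
  have he3 : q 4 ∈ convexHull ℝ ({q 3, q 0, q 1, q 2} : Set E2) := by rw [hs3]; exact he0
  -- Dziobek equations
  have D24 := dziobek3 q m lam hcc 2 4 0 1 3 (by decide) (by decide) (by decide) (by decide) (by decide) (by decide)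
  have D34 := dziobek3 q m lam hcc 3 4 1 2 0 (by decide) (by decide) (by decide) (by decide) (by decide) (by decide)
  have D04 := dziobek3 q m lam hcc 0 4 2 3 1 (by decide) (by decide) (by decide) (by decide) (by decide) (by decide)
  have D14 := dziobek3 q m lam hcc 1 4 3 0 2 (by decide) (by decide) (by decide) (by decide) (by decide) (by decide)
  have D12 := dziobek3 q m lam hcc 1 2 0 3 4 (by decide) (by decide) (by decide) (by decide) (by decide) (by decide)
  have D23 := dziobek3 q m lam hcc 2 3 1 0 4 (by decide) (by decide) (by decide) (by decide) (by decide) (by decide)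
  have D30 := dziobek3 q m lam hcc 3 0 2 1 4 (by decide) (by decide) (by decide) (by decide) (by decide) (by decide)
  have D01 := dziobek3 q m lam hcc 0 1 3 2 4 (by decide) (by decide) (by decide) (by decide) (by decide) (by decide)
  have D23' := dziobek3 q m lam hcc 2 3 0 1 4 (by decide) (by decide) (by decide) (by decide) (by decide) (by decide)
  have D30' := dziobek3 q m lam hcc 3 0 1 2 4 (by decide) (by decide) (by decide) (by decide) (by decide) (by decide)
  have D01' := dziobek3 q m lam hcc 0 1 2 3 4 (by decide) (by decide) (by decide) (by decide) (by decide) (by decide)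
  have D12' := dziobek3 q m lam hcc 1 2 3 0 4 (by decide) (by decide) (by decide) (by decide) (by decide) (by decide)
  refine ⟨⟨?_, ?_⟩, ⟨?_, ?_⟩, ⟨?_, ?_⟩, ⟨?_, ?_⟩⟩
  · exact claimI (q 0) (q 1) (q 2) (q 3) (q 4) (m 0) (m 1) (m 3) (hm 0) (hm 1) (hm 3)
      D24 hc1 hc2 hc3 hc4 hw01 hw12 hw23 hw30
      (hd 2 0 (by decide)) (hd 4 0 (by decide)) (hd 2 1 (by decide))
      (hd 4 1 (by decide)) (hd 2 3 (by decide)) (hd 4 3 (by decide))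
  · exact claimII (q 0) (q 1) (q 2) (q 3) (q 4) (m 0) (m 1) (m 3) (m 4)
      (hm 0) (hm 1) (hm 3) (hm 4) D12 D23' hc1 hc2 hc3 hc4 hw12 hw23 he0
      (hd 1 0 (by decide)) (hd 2 0 (by decide)) (hd 3 0 (by decide))
      (hd 1 3 (by decide)) (hd 2 3 (by decide)) (hd 2 1 (by decide))
      (hd 3 1 (by decide)) (hd 1 4 (by decide)) (hd 2 4 (by decide))
      (hd 3 4 (by decide)) (hd 1 2 (by decide))
  · exact claimI (q 1) (q 2) (q 3) (q 0) (q 4) (m 1) (m 2) (m 0) (hm 1) (hm 2) (hm 0)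
      D34 hc2 hc3 hc4 hc1 hw12 hw23 hw30 hw01
      (hd 3 1 (by decide)) (hd 4 1 (by decide)) (hd 3 2 (by decide))
      (hd 4 2 (by decide)) (hd 3 0 (by decide)) (hd 4 0 (by decide))
  · exact claimII (q 1) (q 2) (q 3) (q 0) (q 4) (m 1) (m 2) (m 0) (m 4)
      (hm 1) (hm 2) (hm 0) (hm 4) D23 D30' hc2 hc3 hc4 hc1 hw23 hw30 he1
      (hd 2 1 (by decide)) (hd 3 1 (by decide)) (hd 0 1 (by decide))
      (hd 2 0 (by decide)) (hd 3 0 (by decide)) (hd 3 2 (by decide))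
      (hd 0 2 (by decide)) (hd 2 4 (by decide)) (hd 3 4 (by decide))
      (hd 0 4 (by decide)) (hd 2 3 (by decide))
  · exact claimI (q 2) (q 3) (q 0) (q 1) (q 4) (m 2) (m 3) (m 1) (hm 2) (hm 3) (hm 1)
      D04 hc3 hc4 hc1 hc2 hw23 hw30 hw01 hw12
      (hd 0 2 (by decide)) (hd 4 2 (by decide)) (hd 0 3 (by decide))
      (hd 4 3 (by decide)) (hd 0 1 (by decide)) (hd 4 1 (by decide))
  · exact claimII (q 2) (q 3) (q 0) (q 1) (q 4) (m 2) (m 3) (m 1) (m 4)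
      (hm 2) (hm 3) (hm 1) (hm 4) D30 D01' hc3 hc4 hc1 hc2 hw30 hw01 he2
      (hd 3 2 (by decide)) (hd 0 2 (by decide)) (hd 1 2 (by decide))
      (hd 3 1 (by decide)) (hd 0 1 (by decide)) (hd 0 3 (by decide))
      (hd 1 3 (by decide)) (hd 3 4 (by decide)) (hd 0 4 (by decide))
      (hd 1 4 (by decide)) (hd 3 0 (by decide))
  · exact claimI (q 3) (q 0) (q 1) (q 2) (q 4) (m 3) (m 0) (m 2) (hm 3) (hm 0) (hm 2)
      D14 hc4 hc1 hc2 hc3 hw30 hw01 hw12 hw23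
      (hd 1 3 (by decide)) (hd 4 3 (by decide)) (hd 1 0 (by decide))
      (hd 4 0 (by decide)) (hd 1 2 (by decide)) (hd 4 2 (by decide))
  · exact claimII (q 3) (q 0) (q 1) (q 2) (q 4) (m 3) (m 0) (m 2) (m 4)
      (hm 3) (hm 0) (hm 2) (hm 4) D01 D12' hc4 hc1 hc2 hc3 hw01 hw12 he3
      (hd 0 3 (by decide)) (hd 1 3 (by decide)) (hd 2 3 (by decide))
      (hd 0 2 (by decide)) (hd 1 2 (by decide)) (hd 1 0 (by decide))
      (hd 2 0 (by decide)) (hd 0 4 (by decide)) (hd 1 4 (by decide))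
      (hd 2 4 (by decide)) (hd 0 1 (by decide))
end
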